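/- For every pair of reactive Turing machines M1 and M2 and every set of communication channels C′ ⊆ C, there exists a reactive Turing machine M such that T(M) is divergence-preserving branching bisimilar to T([M1 ∥ M2]_{C′}). -/

import Mathlib

namespace RTMPaper

/-! ## Labelled transition systems

An `A`-labelled transition system; transition labels are drawn from `Option A`,
where `none` plays the role of the unobservable action τ. -/

structure LTS (A : Type) where
  State : Type
  tr : State → Option A → State → Prop
  init : State
  final : Set State

namespace LTS

variable {A : Type}

/-- A τ-step. -/
def tauStep (T : LTS A) (s t : T.State) : Prop := T.tr s none t

/-- `⇒` : the reflexive–transitive closure of τ-steps. -/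
def tauReach (T : LTS A) : T.State → T.State → Prop :=
  Relation.ReflTransGen T.tauStep

/-- `s —(a)→ t` : either `s —a→ t`, or `a = τ` and `s = t`. -/
def optStep (T : LTS A) (s : T.State) (a : Option A) (t : T.State) : Prop :=
  T.tr s a t ∨ (a = none ∧ s = t)

/-- The set of outgoing transitions of a state. -/
def out (T : LTS A) (s : T.State) : Set (Option A × T.State) :=
  {p | T.tr s p.1 p.2}

def FinitelyBranching (T : LTS A) : Prop := ∀ s, (T.out s).Finite

/-- The branching degree of `T` is bounded by `B`. -/
def BranchingDegreeBoundedBy (T : LTS A) (B : ℕ) : Prop :=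
  ∀ s, (T.out s).Finite ∧ (T.out s).ncard ≤ B

def BoundedlyBranching (T : LTS A) : Prop := ∃ B, T.BranchingDegreeBoundedBy B

/-- A deterministic transition system. -/
def Deterministic (T : LTS A) : Prop :=
  (∀ s a t₁ t₂, T.tr s a t₁ → T.tr s a t₂ → t₁ = t₂) ∧
  (∀ s t, T.tr s none t → ∀ a u, T.tr s a u → a = none)

/-- Relabelling of an LTS along a map of action alphabets (τ is mapped to τ). -/
def relabel {A' : Type} (f : A → A') (T : LTS A) : LTS A' where
  State := T.State
  tr s a t := ∃ a₀ : Option A, T.tr s a₀ t ∧ a = Option.map f a₀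
  init := T.init
  final := T.final

end LTS

/-! ## (Divergence-preserving) branching bisimilarity -/

structure IsBranchingBisimulation {A : Type} (T₁ T₂ : LTS A)
    (R : T₁.State → T₂.State → Prop) : Prop where
  fwd : ∀ s₁ s₂ a s₁', R s₁ s₂ → T₁.tr s₁ a s₁' →
    ∃ s₂'' s₂', T₂.tauReach s₂ s₂'' ∧ T₂.optStep s₂'' a s₂' ∧ R s₁ s₂'' ∧ R s₁' s₂'
  bwd : ∀ s₁ s₂ a s₂', R s₁ s₂ → T₂.tr s₂ a s₂' →
    ∃ s₁'' s₁', T₁.tauReach s₁ s₁'' ∧ T₁.optStep s₁'' a s₁' ∧ R s₁'' s₂ ∧ R s₁' s₂'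
  finFwd : ∀ s₁ s₂, R s₁ s₂ → s₁ ∈ T₁.final →
    ∃ s₂', T₂.tauReach s₂ s₂' ∧ R s₁ s₂' ∧ s₂' ∈ T₂.final
  finBwd : ∀ s₁ s₂, R s₁ s₂ → s₂ ∈ T₂.final →
    ∃ s₁', T₁.tauReach s₁ s₁' ∧ R s₁' s₂ ∧ s₁' ∈ T₁.final

/-- The divergence-preservation conditions on a branching bisimulation. -/
def DivergencePreserving {A : Type} (T₁ T₂ : LTS A)
    (R : T₁.State → T₂.State → Prop) : Prop :=
  (∀ (s₂ : T₂.State) (f : ℕ → T₁.State),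
      (∀ i, T₁.tauStep (f i) (f (i + 1))) → (∀ i, R (f i) s₂) →
      ∃ s₂', Relation.TransGen T₂.tauStep s₂ s₂' ∧ ∃ i, R (f i) s₂') ∧
  (∀ (s₁ : T₁.State) (f : ℕ → T₂.State),
      (∀ i, T₂.tauStep (f i) (f (i + 1))) → (∀ i, R s₁ (f i)) →
      ∃ s₁', Relation.TransGen T₁.tauStep s₁ s₁' ∧ ∃ i, R s₁' (f i))

/-- `T₁ ≈b T₂` : branching bisimilarity. -/
def BranchingBisimilar {A : Type} (T₁ T₂ : LTS A) : Prop :=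
  ∃ R, IsBranchingBisimulation T₁ T₂ R ∧ R T₁.init T₂.init

/-- `T₁ ≈Δb T₂` : divergence-preserving branching bisimilarity. -/
def DPBranchingBisimilar {A : Type} (T₁ T₂ : LTS A) : Prop :=
  ∃ R, IsBranchingBisimulation T₁ T₂ R ∧ DivergencePreserving T₁ T₂ R ∧
    R T₁.init T₂.init

/-! ## Effective and computable transition systems -/

/-- A set of natural numbers is recursively enumerable. -/
def REset (X : Set ℕ) : Prop :=
  ∃ f : ℕ →. Unit, Partrec f ∧ ∀ n, (f n).Dom ↔ n ∈ X

/-- A (finitely branching) LTS is computable if, with respect to some injective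
codings of its labels and states into ℕ, the functions `out` and `fin` are
recursive. -/
def LTS.IsComputable {A : Type} (T : LTS A) : Prop :=
  ∃ hfb : ∀ s, (T.out s).Finite,
    ∃ (cL : Option A → ℕ) (cS : T.State → ℕ),
      Function.Injective cL ∧ Function.Injective cS ∧
      (∃ fo : ℕ → ℕ, Computable fo ∧ ∀ s,
        fo (cS s) =
          Encodable.encode
            (((hfb s).toFinset).image fun p => Nat.pair (cL p.1) (cS p.2))) ∧
      (∃ ff : ℕ → ℕ, Computable ff ∧ ∀ s,
        (s ∈ T.final → ff (cS s) = 1) ∧ (s ∉ T.final → ff (cS s) = 0))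

/-- A (finitely branching) LTS is effective if, with respect to some injective
codings of its labels and states into ℕ, its transition relation and its set of
final states are recursively enumerable. -/
def LTS.IsEffective {A : Type} (T : LTS A) : Prop :=
  T.FinitelyBranching ∧
  ∃ (cL : Option A → ℕ) (cS : T.State → ℕ),
    Function.Injective cL ∧ Function.Injective cS ∧
    REset {n | ∃ s a t, T.tr s a t ∧ n = Nat.pair (cS s) (Nat.pair (cL a) (cS t))} ∧
    REset {n | ∃ s ∈ T.final, n = cS s}

/-! ## Reactive Turing machines -/

inductive Move : Type
  | L | R
deriving DecidableEq

instance : Fintype Move := ⟨{Move.L, Move.R}, fun x => by cases x <;> simp⟩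

/-- A tape instance: the content left of the head (nearest symbol first), the
symbol under the head, and the content right of the head (nearest symbol
first).  Tape symbols are `Option D`, with `none` the blank symbol □. -/
structure Tape (D : Type) where
  left : List (Option D)
  head : Option D
  right : List (Option D)

def Tape.empty (D : Type) : Tape D := ⟨[], none, []⟩

/-- Write `e` at the head position and move the head in direction `m`. -/
def Tape.writeMove {D : Type} (t : Tape D) (e : Option D) : Move → Tape D
  | .L =>
    match t.left with
    | [] => ⟨[], none, e :: t.right⟩
    | x :: l => ⟨l, x, e :: t.right⟩
  | .R =>
    match t.right with
    | [] => ⟨e :: t.left, none, []⟩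
    | x :: r => ⟨e :: t.left, x, r⟩

/-- A reactive Turing machine with action symbols `A` (labels `Option A`,
`none` being τ) and data symbols `D` (tape symbols `Option D`, `none` being
the blank symbol). -/
structure RTM (A D : Type) where
  Q : Type
  [instQ : Fintype Q]
  trans : Q → Option D → Option A → Option D → Move → Q → Prop
  init : Q
  final : Set Q

attribute [instance] RTM.instQ

/-- The transition system `T(M)` associated with an RTM `M`. -/
def RTM.lts {A D : Type} (M : RTM A D) : LTS A where
  State := M.Q × Tape D
  tr c a c' := ∃ e m, M.trans c.1 c.2.head a e m c'.1 ∧ c'.2 = c.2.writeMove e m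
  init := (M.init, Tape.empty D)
  final := {c | c.1 ∈ M.final}

def RTM.Deterministic {A D : Type} (M : RTM A D) : Prop :=
  (∀ s d a e₁ m₁ t₁ e₂ m₂ t₂, M.trans s d a e₁ m₁ t₁ → M.trans s d a e₂ m₂ t₂ →
      e₁ = e₂ ∧ m₁ = m₂ ∧ t₁ = t₂) ∧
  (∀ s d e₁ m₁ t₁, M.trans s d none e₁ m₁ t₁ →
      ∀ a e₂ m₂ t₂, M.trans s d a e₂ m₂ t₂ → a = none)

/-! ## Actions over channels, and parallel composition -/

/-- Actions over a set `C` of channels with communicated values in `V`,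
together with further (base) actions from `B`:  `recv c v` is `c?v`,
`send c v` is `c!v`. -/
inductive CAct (C V B : Type) : Type
  | recv : C → V → CAct C V B
  | send : C → V → CAct C V B
  | base : B → CAct C V B
deriving DecidableEq

/-- The (possibly silent) action `a` is a communication action on one of the
channels in `C'`. -/
def IsComm {C V B : Type} (C' : Set C) : Option (CAct C V B) → Prop
  | some (.recv c _) => c ∈ C'
  | some (.send c _) => c ∈ C'
  | _ => False

/-- Parallel composition `[T₁ ∥ T₂]_{C'}` of transition systems, enforcing
communication on the channels in `C'`. -/
def parLTS {C V B : Type} (C' : Set C) (T₁ T₂ : LTS (CAct C V B)) :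
    LTS (CAct C V B) where
  State := T₁.State × T₂.State
  init := (T₁.init, T₂.init)
  final := {p | p.1 ∈ T₁.final ∧ p.2 ∈ T₂.final}
  tr p a p' :=
    ¬ IsComm C' a ∧
    ((T₁.tr p.1 a p'.1 ∧ p.2 = p'.2) ∨
     (T₂.tr p.2 a p'.2 ∧ p.1 = p'.1) ∨
     (a = none ∧ ∃ c ∈ C', ∃ d : V,
        (T₁.tr p.1 (some (.send c d)) p'.1 ∧ T₂.tr p.2 (some (.recv c d)) p'.2) ∨
        (T₁.tr p.1 (some (.recv c d)) p'.1 ∧ T₂.tr p.2 (some (.send c d)) p'.2)))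

/-- The behaviour of `sender(M)`: output the symbols of `w` one by one along
channel `cu`, then halt in a final state. -/
def outputLTS {C V B : Type} (cu : C) (w : List V) : LTS (CAct C V B) where
  State := List V
  tr s a t := ∃ d, s = d :: t ∧ a = some (.send cu d)
  init := w
  final := {([] : List V)}

/-- A concrete (syntactic, Gödel-numberable) presentation of a reactive Turing
machine: states are `Fin (n+1)`, and the transition relation is a finite set of
tuples. -/
structure RTMc (A D : Type) where
  n : ℕ
  trans : Finset (Fin (n + 1) × Option D × Option A × Option D × Move × Fin (n + 1))
  init : Fin (n + 1)
  final : Finset (Fin (n + 1))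

def RTMc.toRTM {A D : Type} (M : RTMc A D) : RTM A D where
  Q := Fin (M.n + 1)
  trans s d a e m t := (s, d, a, e, m, t) ∈ M.trans
  init := M.init
  final := (↑M.final : Set (Fin (M.n + 1)))

end RTMPaper

namespace RTMPaper
namespace ParSim

/-! ### Basic data for the simulating machine -/

/-- A tape cell of the simulating machine: two tracks, each carrying a
simulated tape symbol and a head-marker bit. -/
abbrev Cell (D : Type) := (Option D × Bool) × (Option D × Bool)

/-- Interpretation of a raw tape symbol as a cell (blank = all-blank cell). -/
def gam {D : Type} (c : Option (Cell D)) : Cell D :=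
  c.getD ((none, false), (none, false))

@[simp] lemma gam_some {D : Type} (c : Cell D) : gam (some c) = c := rfl
@[simp] lemma gam_none {D : Type} : gam (none : Option (Cell D)) = ((none, false), (none, false)) := rfl

/-- Displacement of a move. -/
def dm : Move → ℤ
  | .L => -1
  | .R => 1

lemma dm_ne_zero (m : Move) : dm m ≠ 0 := by cases m <;> simp [dm]

def opp : Move → Move
  | .L => .R
  | .R => .L

/-- Updating a cached side-indicator after a move, given whether the marker
was at the current cell. -/
def updSg (b : Bool) (sg mv : Move) : Move := if b then opp mv else sg

/-- Absolute (head-relative, blank-extended) reading of a tape. -/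
def absRead {D : Type} (t : Tape (Cell D)) (z : ℤ) : Cell D :=
  if z = 0 then gam t.head
  else if 0 < z then gam (t.right.getD (z.toNat - 1) none)
  else gam (t.left.getD ((-z).toNat - 1) none)

@[simp] lemma absRead_zero {D : Type} (t : Tape (Cell D)) : absRead t 0 = gam t.head := by
  simp [absRead]

lemma absRead_empty {D : Type} (z : ℤ) :
    absRead (Tape.empty (Cell D)) z = ((none, false), (none, false)) := by
  unfold absRead Tape.empty
  split
  · rfl
  · split <;> simp [List.getD]

private lemma getD_cons {D : Type} (x : Option (Cell D)) (l : List (Option (Cell D))) (n : ℕ) :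
    (x :: l).getD n none = if n = 0 then x else l.getD (n-1) none := by
  cases n <;> simp

lemma writeMove_L_nil {X : Type} (t : Tape X) (e : Option X) (h : t.left = []) :
    t.writeMove e .L = ⟨[], none, e :: t.right⟩ := by
  simp [Tape.writeMove, h]

lemma writeMove_L_cons {X : Type} (t : Tape X) (e : Option X) (x : Option X) (l : List (Option X))
    (h : t.left = x :: l) :
    t.writeMove e .L = ⟨l, x, e :: t.right⟩ := by
  simp [Tape.writeMove, h]

lemma writeMove_R_nil {X : Type} (t : Tape X) (e : Option X) (h : t.right = []) :
    t.writeMove e .R = ⟨e :: t.left, none, []⟩ := by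
  simp [Tape.writeMove, h]

lemma writeMove_R_cons {X : Type} (t : Tape X) (e : Option X) (x : Option X) (l : List (Option X))
    (h : t.right = x :: l) :
    t.writeMove e .R = ⟨e :: t.left, x, l⟩ := by
  simp [Tape.writeMove, h]

/-- The key locality lemma: reading after a write-and-move step. -/
lemma absRead_writeMove {D : Type} (t : Tape (Cell D)) (e : Option (Cell D)) (m : Move) (z : ℤ) :
    absRead (t.writeMove e m) z = if z = -(dm m) then gam e else absRead t (z + dm m) := by
  have hg : ∀ (l : List (Option (Cell D))) (i j : ℕ), i = j →
      gam (l.getD i none) = gam (l.getD j none) := by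
    intro l i j h; rw [h]
  have hc : ∀ (x : Option (Cell D)) (l : List (Option (Cell D))) (n : ℕ),
      gam ((x :: l).getD n none) = if n = 0 then gam x else gam (l.getD (n-1) none) := by
    intro x l n
    cases n with
    | zero => rfl
    | succ k => rw [if_neg (by omega)]; rfl
  cases m <;> simp only [dm]
  case L =>
    cases hl : t.left with
    | nil =>
      rw [writeMove_L_nil t e hl]
      unfold absRead
      simp only [hl]
      split_ifs <;>
        first
          | rfl
          | (exfalso; omega)
          | (apply hg; omega)
          | (rw [hc, if_pos (by omega)]; done)
          | (rw [hc, if_neg (by omega)]; apply hg; omega)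
          | (simp [List.getD]; done)
    | cons x l =>
      rw [writeMove_L_cons t e x l hl]
      unfold absRead
      simp only [hl]
      split_ifs <;>
        first
          | rfl
          | (exfalso; omega)
          | (apply hg; omega)
          | (rw [hc, if_pos (by omega)]; done)
          | (rw [hc, if_neg (by omega)]; apply hg; omega)
          | (simp [List.getD]; done)
  case R =>
    cases hr : t.right with
    | nil =>
      rw [writeMove_R_nil t e hr]
      unfold absRead
      simp only [hr]
      split_ifs <;>
        first
          | rfl
          | (exfalso; omega)
          | (apply hg; omega)
          | (rw [hc, if_pos (by omega)]; done)
          | (rw [hc, if_neg (by omega)]; apply hg; omega)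
          | (simp [List.getD]; done)
    | cons x r =>
      rw [writeMove_R_cons t e x r hr]
      unfold absRead
      simp only [hr]
      split_ifs <;>
        first
          | rfl
          | (exfalso; omega)
          | (apply hg; omega)
          | (rw [hc, if_pos (by omega)]; done)
          | (rw [hc, if_neg (by omega)]; apply hg; omega)
          | (simp [List.getD]; done)

/-! ### Invariant predicates -/

/-- A blank-extended track reading matches a simulated tape, with the
simulated head at offset `π`. -/
def TrackMatch {D : Type} (f : ℤ → Option D) (π : ℤ) (t : Tape D) : Prop :=
  f π = t.head ∧ (∀ k : ℕ, f (π - 1 - k) = t.left.getD k none) ∧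
    (∀ k : ℕ, f (π + 1 + k) = t.right.getD k none)

/-- `b` has exactly one marker bit set, at `π`. -/
def Mk (b : ℤ → Bool) (π : ℤ) : Prop := ∀ z, b z = true ↔ z = π

/-- `b` has no marker bit set. -/
def NoMk (b : ℤ → Bool) : Prop := ∀ z, b z = false

/-- The cached side-indicator `sg` correctly points towards offset `π`. -/
def SOK (b : ℤ → Bool) (π : ℤ) (sg : Move) : Prop :=
  b 0 = false → (sg = Move.R ↔ 0 < π)

/-- Track-1 reading. -/
def F1 {D : Type} (tp : Tape (Cell D)) : ℤ → Option D := fun z => (absRead tp z).1.1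
def B1 {D : Type} (tp : Tape (Cell D)) : ℤ → Bool := fun z => (absRead tp z).1.2
def F2 {D : Type} (tp : Tape (Cell D)) : ℤ → Option D := fun z => (absRead tp z).2.1
def B2 {D : Type} (tp : Tape (Cell D)) : ℤ → Bool := fun z => (absRead tp z).2.2

/-! #### Helper lemmas about the predicates -/

lemma tm_shift {D : Type} {f g : ℤ → Option D} {π : ℤ} {t : Tape D} (d : ℤ)
    (h : TrackMatch f π t) (hg : ∀ z, g z = f (z + d)) :
    TrackMatch g (π - d) t := by
  obtain ⟨h0, hL, hR⟩ := h
  refine ⟨?_, fun k => ?_, fun k => ?_⟩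
  · rw [hg]; rw [show π - d + d = π by ring]; exact h0
  · rw [hg]; rw [show π - d - 1 - k + d = π - 1 - k by ring]; exact hL k
  · rw [hg]; rw [show π - d + 1 + k + d = π + 1 + k by ring]; exact hR k

lemma tm_write {D : Type} {f g : ℤ → Option D} {t : Tape D} (e : Option D) (m : Move)
    (h : TrackMatch f 0 t) (hg : ∀ z, g z = if z = -(dm m) then e else f (z + dm m)) :
    TrackMatch g 0 (t.writeMove e m) := by
  obtain ⟨h0, hL, hR⟩ := h
  have gd : ∀ (x : Option D) (l : List (Option D)) (n : ℕ),
      (x :: l).getD n none = if n = 0 then x else l.getD (n-1) none := by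
    intro x l n
    cases n with
    | zero => rfl
    | succ k => rw [if_neg (by omega)]; rfl
  have gnil : ∀ (n : ℕ), ([] : List (Option D)).getD n none = none := by
    intro n; simp [List.getD]
  cases m with
  | L =>
    rw [show dm Move.L = -1 from rfl] at hg
    cases hl : t.left with
    | nil =>
      rw [writeMove_L_nil t e hl]
      refine ⟨?_, fun k => ?_, fun k => ?_⟩
      · rw [hg, if_neg (by omega)]
        have h1 := hL 0
        rw [hl, gnil] at h1
        show f _ = none
        convert h1 using 2
        all_goals omega
      · rw [hg, if_neg (by omega)]
        have h1 := hL (k+1)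
        rw [hl, gnil] at h1
        show f _ = ([] : List (Option D)).getD k none
        rw [gnil]
        convert h1 using 2
        all_goals omega
      · rcases k with _ | j
        · rw [hg, if_pos (by omega)]
          show e = (e :: t.right).getD 0 none
          rw [gd, if_pos rfl]
        · rw [hg, if_neg (by omega)]
          show f _ = (e :: t.right).getD (j+1) none
          rw [gd, if_neg (by omega), show j+1-1 = j from rfl]
          convert hR j using 2
          all_goals omega
    | cons x l =>
      rw [writeMove_L_cons t e x l hl]
      refine ⟨?_, fun k => ?_, fun k => ?_⟩
      · rw [hg, if_neg (by omega)]
        have h1 := hL 0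
        rw [hl, gd, if_pos rfl] at h1
        show f _ = x
        convert h1 using 2
        all_goals omega
      · rw [hg, if_neg (by omega)]
        have h1 := hL (k+1)
        rw [hl, gd, if_neg (by omega), show k+1-1 = k from rfl] at h1
        show f _ = l.getD k none
        convert h1 using 2
        all_goals omega
      · rcases k with _ | j
        · rw [hg, if_pos (by omega)]
          show e = (e :: t.right).getD 0 none
          rw [gd, if_pos rfl]
        · rw [hg, if_neg (by omega)]
          show f _ = (e :: t.right).getD (j+1) none
          rw [gd, if_neg (by omega), show j+1-1 = j from rfl]
          convert hR j using 2
          all_goals omega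
  | R =>
    rw [show dm Move.R = 1 from rfl] at hg
    cases hr : t.right with
    | nil =>
      rw [writeMove_R_nil t e hr]
      refine ⟨?_, fun k => ?_, fun k => ?_⟩
      · rw [hg, if_neg (by omega)]
        have h1 := hR 0
        rw [hr, gnil] at h1
        show f _ = none
        convert h1 using 2
        all_goals omega
      · rcases k with _ | j
        · rw [hg, if_pos (by omega)]
          show e = (e :: t.left).getD 0 none
          rw [gd, if_pos rfl]
        · rw [hg, if_neg (by omega)]
          show f _ = (e :: t.left).getD (j+1) none
          rw [gd, if_neg (by omega), show j+1-1 = j from rfl]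
          convert hL j using 2
          all_goals omega
      · rw [hg, if_neg (by omega)]
        have h1 := hR (k+1)
        rw [hr, gnil] at h1
        show f _ = ([] : List (Option D)).getD k none
        rw [gnil]
        convert h1 using 2
        all_goals omega
    | cons x r =>
      rw [writeMove_R_cons t e x r hr]
      refine ⟨?_, fun k => ?_, fun k => ?_⟩
      · rw [hg, if_neg (by omega)]
        have h1 := hR 0
        rw [hr, gd, if_pos rfl] at h1
        show f _ = x
        convert h1 using 2
        all_goals omega
      · rcases k with _ | j
        · rw [hg, if_pos (by omega)]
          show e = (e :: t.left).getD 0 none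
          rw [gd, if_pos rfl]
        · rw [hg, if_neg (by omega)]
          show f _ = (e :: t.left).getD (j+1) none
          rw [gd, if_neg (by omega), show j+1-1 = j from rfl]
          convert hL j using 2
          all_goals omega
      · rw [hg, if_neg (by omega)]
        have h1 := hR (k+1)
        rw [hr, gd, if_neg (by omega), show k+1-1 = k from rfl] at h1
        show f _ = r.getD k none
        convert h1 using 2
        all_goals omega

lemma mk_shift {b g : ℤ → Bool} {π : ℤ} (d : ℤ) (h : Mk b π) (hg : ∀ z, g z = b (z + d)) :
    Mk g (π - d) := by
  intro z
  rw [hg, h]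
  omega

lemma nomk_shift {b g : ℤ → Bool} (d : ℤ) (h : NoMk b) (hg : ∀ z, g z = b (z + d)) :
    NoMk g := fun z => by rw [hg]; exact h _

lemma mk_set {b g : ℤ → Bool} {p d : ℤ} (h : NoMk b)
    (hg : ∀ z, g z = if z = p then true else b (z + d)) : Mk g p := by
  intro z
  rw [hg]
  split
  · simp [*]
  · next hzp => simp [h (z + d), hzp]

lemma nomk_unset {b g : ℤ → Bool} {d : ℤ} (h : Mk b 0)
    (hg : ∀ z, g z = if z = -d then false else b (z + d)) : NoMk g := by
  intro z
  rw [hg]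
  split
  · rfl
  · next hzd =>
    rw [Bool.eq_false_iff]
    intro hb
    have := (h _).1 hb
    omega

lemma sok_step {b g : ℤ → Bool} {π : ℤ} {sg : Move} (mv : Move)
    (hMk : Mk b π) (h : SOK b π sg) (hg : ∀ z, g z = b (z + dm mv)) :
    SOK g (π - dm mv) (updSg (b 0) sg mv) := by
  intro h0
  rw [hg] at h0
  simp only [zero_add] at h0
  by_cases hb : b 0 = true
  · have hπ : π = 0 := ((hMk 0).1 hb).symm
    subst hπ
    rw [updSg, if_pos hb]
    cases mv <;> simp only [opp, dm] <;> decide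
  · have hb' : b 0 = false := by simpa using hb
    have hπ : π ≠ 0 := fun h' => by rw [h'] at hMk; exact hb ((hMk 0).2 rfl)
    have hside := h hb'
    have hne : dm mv ≠ π := fun h' => by
      rw [h'] at h0
      exact absurd ((hMk π).2 rfl) (by simp [h0])
    rw [updSg, if_neg (by simp [hb'])]
    rcases (by cases sg; exacts [Or.inr rfl, Or.inl rfl] : sg = Move.R ∨ sg = Move.L)
      with h' | h' <;> subst h'
    · have hp : 0 < π := hside.mp rfl
      constructor
      · intro _
        cases mv <;> simp only [dm] at hne ⊢ <;> omega
      · intro _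
        rfl
    · have hp : ¬ 0 < π := fun hh => absurd (hside.mpr hh) (by simp)
      constructor
      · intro hh
        exact absurd hh (by simp)
      · intro hh
        exfalso
        cases mv <;> simp only [dm] at hne hh ⊢ <;> omega

lemma sok_new {g : ℤ → Bool} (mv : Move) : SOK g (-(dm mv)) (opp mv) := by
  intro _
  cases mv <;> simp [opp, dm] <;> omega

/-- Distance decreases when walking towards the marker. -/
lemma dist_dec {b : ℤ → Bool} {π : ℤ} {sg : Move} (h : SOK b π sg) (hb : b 0 = false)
    (hπ : π ≠ 0) : (π - dm sg).natAbs = π.natAbs - 1 ∧ π.natAbs ≠ 0 := by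
  have hside := h hb
  rcases (by cases sg; exacts [Or.inr rfl, Or.inl rfl] : sg = Move.R ∨ sg = Move.L)
    with h' | h' <;> subst h'
  · have hp : 0 < π := hside.mp rfl
    simp only [dm]
    omega
  · have hp : ¬ 0 < π := fun hh => absurd (hside.mpr hh) (by simp)
    simp only [dm]
    omega

/-! ### The simulating machine -/

/-- Control phases of the simulating machine. -/
inductive Ph (D : Type) where
  | boot
  | idle
  | mark1 (r : Option (Option D × Move))
  | pend2 (e : Option D) (m : Move)
  | mark2
deriving Fintype

/-- Control states of the simulating machine. -/
structure Ctrl (Q1 Q2 D : Type) where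
  q1 : Q1
  q2 : Q2
  d2 : Option D
  sg1 : Move
  sg2 : Move
  ph : Ph D

def ctrlEquiv (Q1 Q2 D : Type) : Ctrl Q1 Q2 D ≃ (Q1 × Q2 × Option D × Move × Move × Ph D) where
  toFun c := (c.q1, c.q2, c.d2, c.sg1, c.sg2, c.ph)
  invFun p := ⟨p.1, p.2.1, p.2.2.1, p.2.2.2.1, p.2.2.2.2.1, p.2.2.2.2.2⟩
  left_inv _ := rfl
  right_inv _ := rfl

instance {Q1 Q2 D : Type} [Fintype Q1] [Fintype Q2] [Fintype D] : Fintype (Ctrl Q1 Q2 D) :=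
  Fintype.ofEquiv _ (ctrlEquiv Q1 Q2 D).symm

section Machine

variable {C D B : Type} (M₁ M₂ : RTM (CAct C (Option D) B) D) (C' : Set C)

/-- The transition relation of the simulating machine. -/
inductive MTr : Ctrl M₁.Q M₂.Q D → Option (Cell D) → Option (CAct C (Option D) B) →
    Option (Cell D) → Move → Ctrl M₁.Q M₂.Q D → Prop where
  | boot (q1 q2 d2 sg1 sg2 c) :
      MTr ⟨q1, q2, d2, sg1, sg2, .boot⟩ c none (some ((none, true), (none, true))) .L
        ⟨q1, q2, d2, .R, .R, .idle⟩
  | walk (q1 q2 d2 sg1 sg2 c) (h : (gam c).1.2 = false) :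
      MTr ⟨q1, q2, d2, sg1, sg2, .idle⟩ c none (some (gam c)) sg1
        ⟨q1, q2, d2, sg1, updSg (gam c).2.2 sg2 sg1, .idle⟩
  | act1 (q1 q2 d2 sg1 sg2 c a e1 m1 q1')
      (hb : (gam c).1.2 = true) (ht : M₁.trans q1 (gam c).1.1 a e1 m1 q1')
      (hic : ¬ IsComm C' a) :
      MTr ⟨q1, q2, d2, sg1, sg2, .idle⟩ c a (some ((e1, false), (gam c).2)) m1
        ⟨q1', q2, d2, sg1, updSg (gam c).2.2 sg2 m1, .mark1 none⟩
  | act2 (q1 q2 d2 sg1 sg2 c a e2 m2 q2')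
      (hb : (gam c).1.2 = true) (ht : M₂.trans q2 d2 a e2 m2 q2')
      (hic : ¬ IsComm C' a) :
      MTr ⟨q1, q2, d2, sg1, sg2, .idle⟩ c a (some (gam c))
        (if (gam c).2.2 then .L else sg2)
        ⟨q1, q2', d2, opp (if (gam c).2.2 then .L else sg2),
          updSg (gam c).2.2 sg2 (if (gam c).2.2 then .L else sg2), .pend2 e2 m2⟩
  | act3 (q1 q2 d2 sg1 sg2 c ch v e1 m1 q1' e2 m2 q2')
      (hb : (gam c).1.2 = true) (hch : ch ∈ C')
      (ht : (M₁.trans q1 (gam c).1.1 (some (.send ch v)) e1 m1 q1' ∧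
              M₂.trans q2 d2 (some (.recv ch v)) e2 m2 q2') ∨
            (M₁.trans q1 (gam c).1.1 (some (.recv ch v)) e1 m1 q1' ∧
              M₂.trans q2 d2 (some (.send ch v)) e2 m2 q2')) :
      MTr ⟨q1, q2, d2, sg1, sg2, .idle⟩ c none (some ((e1, false), (gam c).2)) m1
        ⟨q1', q2', d2, sg1, updSg (gam c).2.2 sg2 m1, .mark1 (some (e2, m2))⟩
  | mark1none (q1 q2 d2 sg1 sg2 c) :
      MTr ⟨q1, q2, d2, sg1, sg2, .mark1 none⟩ c none
        (some (((gam c).1.1, true), (gam c).2)) .L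
        ⟨q1, q2, d2, .R, updSg (gam c).2.2 sg2 .L, .idle⟩
  | mark1some (q1 q2 d2 sg1 sg2 c e2 m2) :
      MTr ⟨q1, q2, d2, sg1, sg2, .mark1 (some (e2, m2))⟩ c none
        (some (((gam c).1.1, true), (gam c).2))
        (if (gam c).2.2 then .L else sg2)
        ⟨q1, q2, d2, opp (if (gam c).2.2 then .L else sg2),
          updSg (gam c).2.2 sg2 (if (gam c).2.2 then .L else sg2), .pend2 e2 m2⟩
  | pwalk (q1 q2 d2 sg1 sg2 c e2 m2) (h : (gam c).2.2 = false) :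
      MTr ⟨q1, q2, d2, sg1, sg2, .pend2 e2 m2⟩ c none (some (gam c)) sg2
        ⟨q1, q2, d2, updSg (gam c).1.2 sg1 sg2, sg2, .pend2 e2 m2⟩
  | pact (q1 q2 d2 sg1 sg2 c e2 m2) (h : (gam c).2.2 = true) :
      MTr ⟨q1, q2, d2, sg1, sg2, .pend2 e2 m2⟩ c none
        (some ((gam c).1, (e2, false))) m2
        ⟨q1, q2, d2, updSg (gam c).1.2 sg1 m2, sg2, .mark2⟩
  | mark2 (q1 q2 d2 sg1 sg2 c) :
      MTr ⟨q1, q2, d2, sg1, sg2, .mark2⟩ c none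
        (some ((gam c).1, ((gam c).2.1, true))) .L
        ⟨q1, q2, (gam c).2.1, updSg (gam c).1.2 sg1 .L, .R, .idle⟩

variable [Fintype C] [Fintype D] [Fintype B]

/-- The simulating machine. -/
def Mach : RTM (CAct C (Option D) B) (Cell D) where
  Q := Ctrl M₁.Q M₂.Q D
  trans := MTr M₁ M₂ C'
  init := ⟨M₁.init, M₂.init, none, .R, .R, .boot⟩
  final := {ct | ct.ph = .idle ∧ ct.q1 ∈ M₁.final ∧ ct.q2 ∈ M₂.final}

/-- The simulation relation. -/
inductive Rel : (Ctrl M₁.Q M₂.Q D × Tape (Cell D)) →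
    ((M₁.Q × Tape D) × (M₂.Q × Tape D)) → Prop where
  | rboot (q1 q2 sg1 sg2 tp t1 t2)
      (hbl : ∀ z, absRead tp z = ((none, false), (none, false)))
      (tm1 : TrackMatch (F1 tp) 0 t1) (tm2 : TrackMatch (F2 tp) 0 t2) :
      Rel (⟨q1, q2, t2.head, sg1, sg2, .boot⟩, tp) ((q1, t1), (q2, t2))
  | ridle (q1 q2 sg1 sg2 tp t1 t2 π1 π2)
      (h1 : Mk (B1 tp) π1) (h2 : Mk (B2 tp) π2)
      (tm1 : TrackMatch (F1 tp) π1 t1) (tm2 : TrackMatch (F2 tp) π2 t2)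
      (s1 : SOK (B1 tp) π1 sg1) (s2 : SOK (B2 tp) π2 sg2) :
      Rel (⟨q1, q2, t2.head, sg1, sg2, .idle⟩, tp) ((q1, t1), (q2, t2))
  | rmark1none (q1 q2 sg1 sg2 tp t1 t2 π2)
      (h1 : NoMk (B1 tp)) (h2 : Mk (B2 tp) π2)
      (tm1 : TrackMatch (F1 tp) 0 t1) (tm2 : TrackMatch (F2 tp) π2 t2)
      (s2 : SOK (B2 tp) π2 sg2) :
      Rel (⟨q1, q2, t2.head, sg1, sg2, .mark1 none⟩, tp) ((q1, t1), (q2, t2))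
  | rmark1some (q1 q2 d2 sg1 sg2 tp t1 t2pre π2 e2 m2)
      (h1 : NoMk (B1 tp)) (h2 : Mk (B2 tp) π2)
      (tm1 : TrackMatch (F1 tp) 0 t1) (tm2 : TrackMatch (F2 tp) π2 t2pre)
      (s2 : SOK (B2 tp) π2 sg2) :
      Rel (⟨q1, q2, d2, sg1, sg2, .mark1 (some (e2, m2))⟩, tp)
        ((q1, t1), (q2, t2pre.writeMove e2 m2))
  | rpend2 (q1 q2 d2 sg1 sg2 tp t1 t2pre π1 π2 e2 m2)
      (h1 : Mk (B1 tp) π1) (h2 : Mk (B2 tp) π2)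
      (tm1 : TrackMatch (F1 tp) π1 t1) (tm2 : TrackMatch (F2 tp) π2 t2pre)
      (s1 : SOK (B1 tp) π1 sg1) (s2 : SOK (B2 tp) π2 sg2) :
      Rel (⟨q1, q2, d2, sg1, sg2, .pend2 e2 m2⟩, tp)
        ((q1, t1), (q2, t2pre.writeMove e2 m2))
  | rmark2 (q1 q2 d2 sg1 sg2 tp t1 t2 π1)
      (h1 : Mk (B1 tp) π1) (h2 : NoMk (B2 tp))
      (tm1 : TrackMatch (F1 tp) π1 t1) (tm2 : TrackMatch (F2 tp) 0 t2)
      (s1 : SOK (B1 tp) π1 sg1) :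
      Rel (⟨q1, q2, d2, sg1, sg2, .mark2⟩, tp) ((q1, t1), (q2, t2))

end Machine

/-! ### Core step-effect lemmas -/

section Cores

variable {C D B : Type} {M₁ M₂ : RTM (CAct C (Option D) B) D}

lemma read_write (tp : Tape (Cell D)) (cv : Cell D) (mv : Move) (z : ℤ) :
    absRead (tp.writeMove (some cv) mv) z =
      if z = -(dm mv) then cv else absRead tp (z + dm mv) := by
  rw [absRead_writeMove]; simp only [gam_some]

lemma b1_zero (tp : Tape (Cell D)) : B1 tp 0 = (gam tp.head).1.2 := by
  show (absRead tp 0).1.2 = _; rw [absRead_zero]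
lemma b2_zero (tp : Tape (Cell D)) : B2 tp 0 = (gam tp.head).2.2 := by
  show (absRead tp 0).2.2 = _; rw [absRead_zero]
lemma f1_zero (tp : Tape (Cell D)) : F1 tp 0 = (gam tp.head).1.1 := by
  show (absRead tp 0).1.1 = _; rw [absRead_zero]
lemma f2_zero (tp : Tape (Cell D)) : F2 tp 0 = (gam tp.head).2.1 := by
  show (absRead tp 0).2.1 = _; rw [absRead_zero]

@[simp] lemma updSg_false (sg mv : Move) : updSg false sg mv = sg := by simp [updSg]
@[simp] lemma updSg_true (sg mv : Move) : updSg true sg mv = opp mv := by simp [updSg]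

/-- Identity write: a pure shift. -/
lemma read_write_id (tp : Tape (Cell D)) (mv : Move) (z : ℤ) :
    absRead (tp.writeMove (some (gam tp.head)) mv) z = absRead tp (z + dm mv) := by
  rw [read_write]
  split
  · next h =>
    subst h
    rw [show -(dm mv) + dm mv = 0 by ring, absRead_zero]
  · rfl

/-- Component bundle for idle/pend2-like configurations. -/
def Inv2 {D : Type} (tp : Tape (Cell D)) (t1 t2m : Tape D) (π1 π2 : ℤ)
    (sg1 sg2 : Move) : Prop :=
  Mk (B1 tp) π1 ∧ Mk (B2 tp) π2 ∧ TrackMatch (F1 tp) π1 t1 ∧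
    TrackMatch (F2 tp) π2 t2m ∧ SOK (B1 tp) π1 sg1 ∧ SOK (B2 tp) π2 sg2

/-- Component bundle for mark2-like configurations. -/
def InvM2 {D : Type} (tp : Tape (Cell D)) (t1 t2m : Tape D) (π1 : ℤ)
    (sg1 : Move) : Prop :=
  Mk (B1 tp) π1 ∧ NoMk (B2 tp) ∧ TrackMatch (F1 tp) π1 t1 ∧
    TrackMatch (F2 tp) 0 t2m ∧ SOK (B1 tp) π1 sg1

/-- Core lemma for the boot step. -/
lemma core_boot (q1 q2 tp t1 t2)
    (hbl : ∀ z, absRead tp z = ((none, false), (none, false)))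
    (tm1 : TrackMatch (F1 tp) 0 t1) (tm2 : TrackMatch (F2 tp) 0 t2) :
    Rel M₁ M₂ (⟨q1, q2, t2.head, .R, .R, .idle⟩,
        tp.writeMove (some ((none, true), (none, true))) .L) ((q1, t1), (q2, t2))
    ∧ Inv2 (tp.writeMove (some ((none, true), (none, true))) .L) t1 t2 1 1 .R .R := by
  set tp' := tp.writeMove (some ((none, true), (none, true))) .L with htp'
  have hrw : ∀ z, absRead tp' z =
      if z = 1 then ((none, true), (none, true)) else absRead tp (z + -1) := by
    intro z
    rw [htp', read_write]
    simp [dm]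
  have hF1 : ∀ z, F1 tp' z = none := by
    intro z
    show (absRead tp' z).1.1 = none
    rw [hrw]
    split
    · rfl
    · rw [hbl]
  have hF2 : ∀ z, F2 tp' z = none := by
    intro z
    show (absRead tp' z).2.1 = none
    rw [hrw]
    split
    · rfl
    · rw [hbl]
  have hB1 : Mk (B1 tp') 1 := by
    intro z
    show (absRead tp' z).1.2 = true ↔ z = 1
    rw [hrw]
    split
    · simp [*]
    · rw [hbl]
      simpa using by omega
  have hB2 : Mk (B2 tp') 1 := by
    intro z
    show (absRead tp' z).2.2 = true ↔ z = 1
    rw [hrw]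
    split
    · simp [*]
    · rw [hbl]
      simpa using by omega
  have hblank1 : ∀ z, F1 tp z = none := fun z => by
    show (absRead tp z).1.1 = none; rw [hbl]
  have hblank2 : ∀ z, F2 tp z = none := fun z => by
    show (absRead tp z).2.1 = none; rw [hbl]
  have htm1 : TrackMatch (F1 tp') 1 t1 := by
    obtain ⟨a, b, c⟩ := tm1
    exact ⟨by rw [hF1, ← a, hblank1], fun k => by rw [hF1, ← b k, hblank1],
      fun k => by rw [hF1, ← c k, hblank1]⟩
  have htm2 : TrackMatch (F2 tp') 1 t2 := by
    obtain ⟨a, b, c⟩ := tm2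
    exact ⟨by rw [hF2, ← a, hblank2], fun k => by rw [hF2, ← b k, hblank2],
      fun k => by rw [hF2, ← c k, hblank2]⟩
  exact ⟨Rel.ridle q1 q2 _ _ tp' t1 t2 1 1 hB1 hB2 htm1 htm2
    (fun _ => by simp) (fun _ => by simp),
    hB1, hB2, htm1, htm2, fun _ => by simp, fun _ => by simp⟩

/-- Core lemma for an idle walking step. -/
lemma core_walk (q1 q2 sg1 sg2 tp t1 t2 π1 π2)
    (h1 : Mk (B1 tp) π1) (h2 : Mk (B2 tp) π2)
    (tm1 : TrackMatch (F1 tp) π1 t1) (tm2 : TrackMatch (F2 tp) π2 t2)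
    (s1 : SOK (B1 tp) π1 sg1) (s2 : SOK (B2 tp) π2 sg2)
    (hb : (gam tp.head).1.2 = false) :
    Rel M₁ M₂ (⟨q1, q2, t2.head, sg1, updSg (gam tp.head).2.2 sg2 sg1, .idle⟩,
        tp.writeMove (some (gam tp.head)) sg1) ((q1, t1), (q2, t2))
    ∧ Inv2 (tp.writeMove (some (gam tp.head)) sg1) t1 t2 (π1 - dm sg1) (π2 - dm sg1)
        sg1 (updSg (gam tp.head).2.2 sg2 sg1) := by
  set tp' := tp.writeMove (some (gam tp.head)) sg1 with htp'
  have hsh : ∀ z, absRead tp' z = absRead tp (z + dm sg1) := fun z => by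
    rw [htp', read_write_id]
  have hF1 : ∀ z, F1 tp' z = F1 tp (z + dm sg1) := fun z => by
    show (absRead tp' z).1.1 = _; rw [hsh]; rfl
  have hF2 : ∀ z, F2 tp' z = F2 tp (z + dm sg1) := fun z => by
    show (absRead tp' z).2.1 = _; rw [hsh]; rfl
  have hB1 : ∀ z, B1 tp' z = B1 tp (z + dm sg1) := fun z => by
    show (absRead tp' z).1.2 = _; rw [hsh]; rfl
  have hB2 : ∀ z, B2 tp' z = B2 tp (z + dm sg1) := fun z => by
    show (absRead tp' z).2.2 = _; rw [hsh]; rfl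
  have hs1 := sok_step sg1 h1 s1 hB1
  rw [b1_zero, hb, updSg_false] at hs1
  have hs2 := sok_step sg1 h2 s2 hB2
  rw [b2_zero] at hs2
  exact ⟨Rel.ridle q1 q2 _ _ tp' t1 t2 _ _ (mk_shift _ h1 hB1) (mk_shift _ h2 hB2)
    (tm_shift _ tm1 hF1) (tm_shift _ tm2 hF2) hs1 hs2,
    mk_shift _ h1 hB1, mk_shift _ h2 hB2, tm_shift _ tm1 hF1, tm_shift _ tm2 hF2, hs1, hs2⟩

/-- Core lemma for an `act1` step (component-1 transition). -/
lemma core_act1 (q1' q2 sg1 sg2 tp t1 t2 π2 e1 m1)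
    (h1 : Mk (B1 tp) 0) (h2 : Mk (B2 tp) π2)
    (tm1 : TrackMatch (F1 tp) 0 t1) (tm2 : TrackMatch (F2 tp) π2 t2)
    (s2 : SOK (B2 tp) π2 sg2) :
    Rel M₁ M₂ (⟨q1', q2, t2.head, sg1, updSg (gam tp.head).2.2 sg2 m1, .mark1 none⟩,
        tp.writeMove (some ((e1, false), (gam tp.head).2)) m1)
      ((q1', t1.writeMove e1 m1), (q2, t2)) := by
  set tp' := tp.writeMove (some ((e1, false), (gam tp.head).2)) m1 with htp'
  have hrw : ∀ z, absRead tp' z =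
      if z = -(dm m1) then ((e1, false), (gam tp.head).2) else absRead tp (z + dm m1) := by
    intro z; rw [htp', read_write]
  have hF1 : ∀ z, F1 tp' z = if z = -(dm m1) then e1 else F1 tp (z + dm m1) := by
    intro z
    show (absRead tp' z).1.1 = _
    rw [hrw]
    split <;> rfl
  have hB1 : ∀ z, B1 tp' z = if z = -(dm m1) then false else B1 tp (z + dm m1) := by
    intro z
    show (absRead tp' z).1.2 = _
    rw [hrw]
    split <;> rfl
  have hF2 : ∀ z, F2 tp' z = F2 tp (z + dm m1) := by
    intro z
    show (absRead tp' z).2.1 = _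
    rw [hrw]
    split
    · next h =>
      subst h
      rw [show -(dm m1) + dm m1 = 0 by ring]
      show _ = (absRead tp 0).2.1
      rw [absRead_zero]
    · rfl
  have hB2 : ∀ z, B2 tp' z = B2 tp (z + dm m1) := by
    intro z
    show (absRead tp' z).2.2 = _
    rw [hrw]
    split
    · next h =>
      subst h
      rw [show -(dm m1) + dm m1 = 0 by ring]
      show _ = (absRead tp 0).2.2
      rw [absRead_zero]
    · rfl
  have hs2 := sok_step m1 h2 s2 hB2
  rw [b2_zero] at hs2
  exact Rel.rmark1none q1' q2 sg1 _ tp' (t1.writeMove e1 m1) t2 _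
    (nomk_unset h1 hB1) (mk_shift _ h2 hB2) (tm_write e1 m1 tm1 hF1)
    (tm_shift _ tm2 hF2) hs2

/-- Core lemma for an `act2` step (component-2 transition). -/
lemma core_act2 (q1 q2' sg1 sg2 tp t1 t2 π2 e2 m2)
    (h1 : Mk (B1 tp) 0) (h2 : Mk (B2 tp) π2)
    (tm1 : TrackMatch (F1 tp) 0 t1) (tm2 : TrackMatch (F2 tp) π2 t2)
    (s1 : SOK (B1 tp) 0 sg1) (s2 : SOK (B2 tp) π2 sg2) :
    Rel M₁ M₂ (⟨q1, q2', t2.head,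
        opp (if (gam tp.head).2.2 then .L else sg2),
        updSg (gam tp.head).2.2 sg2 (if (gam tp.head).2.2 then .L else sg2),
        .pend2 e2 m2⟩,
        tp.writeMove (some (gam tp.head)) (if (gam tp.head).2.2 then .L else sg2))
      ((q1, t1), (q2', t2.writeMove e2 m2)) := by
  set mv := if (gam tp.head).2.2 then Move.L else sg2 with hmv
  set tp' := tp.writeMove (some (gam tp.head)) mv with htp'
  have hsh : ∀ z, absRead tp' z = absRead tp (z + dm mv) := fun z => by
    rw [htp', read_write_id]
  have hF1 : ∀ z, F1 tp' z = F1 tp (z + dm mv) := fun z => by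
    show (absRead tp' z).1.1 = _; rw [hsh]; rfl
  have hF2 : ∀ z, F2 tp' z = F2 tp (z + dm mv) := fun z => by
    show (absRead tp' z).2.1 = _; rw [hsh]; rfl
  have hB1 : ∀ z, B1 tp' z = B1 tp (z + dm mv) := fun z => by
    show (absRead tp' z).1.2 = _; rw [hsh]; rfl
  have hB2 : ∀ z, B2 tp' z = B2 tp (z + dm mv) := fun z => by
    show (absRead tp' z).2.2 = _; rw [hsh]; rfl
  have hb1 : B1 tp 0 = true := (h1 0).2 rfl
  have hs1 := sok_step mv h1 s1 hB1
  rw [hb1, updSg_true] at hs1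
  have hs2 := sok_step mv h2 s2 hB2
  rw [b2_zero] at hs2
  exact Rel.rpend2 q1 q2' _ _ _ tp' t1 t2 _ _ e2 m2 (mk_shift _ h1 hB1)
    (mk_shift _ h2 hB2) (tm_shift _ tm1 hF1) (tm_shift _ tm2 hF2) hs1 hs2

/-- Core lemma for an `act3` step (communication). -/
lemma core_act3 (q1' q2' d2 sg1 sg2 tp t1 t2 π2 e1 m1 e2 m2)
    (h1 : Mk (B1 tp) 0) (h2 : Mk (B2 tp) π2)
    (tm1 : TrackMatch (F1 tp) 0 t1) (tm2 : TrackMatch (F2 tp) π2 t2)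
    (s2 : SOK (B2 tp) π2 sg2) :
    Rel M₁ M₂ (⟨q1', q2', d2, sg1, updSg (gam tp.head).2.2 sg2 m1, .mark1 (some (e2, m2))⟩,
        tp.writeMove (some ((e1, false), (gam tp.head).2)) m1)
      ((q1', t1.writeMove e1 m1), (q2', t2.writeMove e2 m2)) := by
  set tp' := tp.writeMove (some ((e1, false), (gam tp.head).2)) m1 with htp'
  have hrw : ∀ z, absRead tp' z =
      if z = -(dm m1) then ((e1, false), (gam tp.head).2) else absRead tp (z + dm m1) := by
    intro z; rw [htp', read_write]
  have hF1 : ∀ z, F1 tp' z = if z = -(dm m1) then e1 else F1 tp (z + dm m1) := by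
    intro z
    show (absRead tp' z).1.1 = _
    rw [hrw]
    split <;> rfl
  have hB1 : ∀ z, B1 tp' z = if z = -(dm m1) then false else B1 tp (z + dm m1) := by
    intro z
    show (absRead tp' z).1.2 = _
    rw [hrw]
    split <;> rfl
  have hF2 : ∀ z, F2 tp' z = F2 tp (z + dm m1) := by
    intro z
    show (absRead tp' z).2.1 = _
    rw [hrw]
    split
    · next h =>
      subst h
      rw [show -(dm m1) + dm m1 = 0 by ring]
      show _ = (absRead tp 0).2.1
      rw [absRead_zero]
    · rfl
  have hB2 : ∀ z, B2 tp' z = B2 tp (z + dm m1) := by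
    intro z
    show (absRead tp' z).2.2 = _
    rw [hrw]
    split
    · next h =>
      subst h
      rw [show -(dm m1) + dm m1 = 0 by ring]
      show _ = (absRead tp 0).2.2
      rw [absRead_zero]
    · rfl
  have hs2 := sok_step m1 h2 s2 hB2
  rw [b2_zero] at hs2
  exact Rel.rmark1some q1' q2' d2 sg1 _ tp' (t1.writeMove e1 m1) t2 _ e2 m2
    (nomk_unset h1 hB1) (mk_shift _ h2 hB2) (tm_write e1 m1 tm1 hF1)
    (tm_shift _ tm2 hF2) hs2

/-- Core lemma for the `mark1none` step. -/
lemma core_mark1none (q1 q2 sg2 tp t1 t2 π2)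
    (h1 : NoMk (B1 tp)) (h2 : Mk (B2 tp) π2)
    (tm1 : TrackMatch (F1 tp) 0 t1) (tm2 : TrackMatch (F2 tp) π2 t2)
    (s2 : SOK (B2 tp) π2 sg2) :
    Rel M₁ M₂ (⟨q1, q2, t2.head, .R, updSg (gam tp.head).2.2 sg2 .L, .idle⟩,
        tp.writeMove (some (((gam tp.head).1.1, true), (gam tp.head).2)) .L)
      ((q1, t1), (q2, t2))
    ∧ Inv2 (tp.writeMove (some (((gam tp.head).1.1, true), (gam tp.head).2)) .L)
        t1 t2 1 (π2 + 1) .R (updSg (gam tp.head).2.2 sg2 .L) := by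
  set tp' := tp.writeMove (some (((gam tp.head).1.1, true), (gam tp.head).2)) .L with htp'
  have hrw : ∀ z, absRead tp' z =
      if z = 1 then (((gam tp.head).1.1, true), (gam tp.head).2) else absRead tp (z + -1) := by
    intro z; rw [htp', read_write]; simp [dm]
  have hF1 : ∀ z, F1 tp' z = F1 tp (z + -1) := by
    intro z
    show (absRead tp' z).1.1 = _
    rw [hrw]
    split
    · next h =>
      subst h
      rw [show (1:ℤ) + -1 = 0 by ring]
      show _ = (absRead tp 0).1.1
      rw [absRead_zero]
    · rfl
  have hB1 : ∀ z, B1 tp' z = if z = 1 then true else B1 tp (z + -1) := by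
    intro z
    show (absRead tp' z).1.2 = _
    rw [hrw]
    split <;> rfl
  have hF2 : ∀ z, F2 tp' z = F2 tp (z + -1) := by
    intro z
    show (absRead tp' z).2.1 = _
    rw [hrw]
    split
    · next h =>
      subst h
      rw [show (1:ℤ) + -1 = 0 by ring]
      show _ = (absRead tp 0).2.1
      rw [absRead_zero]
    · rfl
  have hB2 : ∀ z, B2 tp' z = B2 tp (z + -1) := by
    intro z
    show (absRead tp' z).2.2 = _
    rw [hrw]
    split
    · next h =>
      subst h
      rw [show (1:ℤ) + -1 = 0 by ring]
      show _ = (absRead tp 0).2.2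
      rw [absRead_zero]
    · rfl
  have hB2' : ∀ z, B2 tp' z = B2 tp (z + dm .L) := by simpa [dm] using hB2
  have hs2 := sok_step (b := B2 tp) .L h2 s2 hB2'
  rw [b2_zero] at hs2
  have htm1 : TrackMatch (F1 tp') 1 t1 := by
    have := tm_shift (f := F1 tp) (-1) tm1 hF1
    simpa using this
  have htm2 : TrackMatch (F2 tp') (π2 + 1) t2 := by
    have := tm_shift (f := F2 tp) (-1) tm2 hF2
    simpa using this
  have hmk1 : Mk (B1 tp') 1 := mk_set h1 hB1
  have hmk2 : Mk (B2 tp') (π2 + 1) := by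
    have := mk_shift (b := B2 tp) (-1) h2 hB2
    simpa using this
  have hs2' : SOK (B2 tp') (π2 + 1) (updSg (gam tp.head).2.2 sg2 .L) := by
    have : π2 - dm Move.L = π2 + 1 := by simp only [dm]; ring
    rwa [this] at hs2
  exact ⟨Rel.ridle q1 q2 _ _ tp' t1 t2 1 (π2 + 1) hmk1 hmk2 htm1 htm2
    (fun _ => by simp) hs2',
    hmk1, hmk2, htm1, htm2, fun _ => by simp, hs2'⟩


/-- Core lemma for the `mark1some` step. -/
lemma core_mark1some (q1 q2 d2 sg2 tp t1 t2pre π2 e2 m2)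
    (h1 : NoMk (B1 tp)) (h2 : Mk (B2 tp) π2)
    (tm1 : TrackMatch (F1 tp) 0 t1) (tm2 : TrackMatch (F2 tp) π2 t2pre)
    (s2 : SOK (B2 tp) π2 sg2) :
    Rel M₁ M₂ (⟨q1, q2, d2,
        opp (if (gam tp.head).2.2 then .L else sg2),
        updSg (gam tp.head).2.2 sg2 (if (gam tp.head).2.2 then .L else sg2),
        .pend2 e2 m2⟩,
        tp.writeMove (some (((gam tp.head).1.1, true), (gam tp.head).2))
          (if (gam tp.head).2.2 then .L else sg2))
      ((q1, t1), (q2, t2pre.writeMove e2 m2))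
    ∧ Inv2 (tp.writeMove (some (((gam tp.head).1.1, true), (gam tp.head).2))
          (if (gam tp.head).2.2 then .L else sg2))
        t1 t2pre (-(dm (if (gam tp.head).2.2 then Move.L else sg2)))
        (π2 - dm (if (gam tp.head).2.2 then Move.L else sg2))
        (opp (if (gam tp.head).2.2 then .L else sg2))
        (updSg (gam tp.head).2.2 sg2 (if (gam tp.head).2.2 then .L else sg2)) := by
  set mv := if (gam tp.head).2.2 then Move.L else sg2 with hmv
  set tp' := tp.writeMove (some (((gam tp.head).1.1, true), (gam tp.head).2)) mv with htp'
  have hrw : ∀ z, absRead tp' z =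
      if z = -(dm mv) then (((gam tp.head).1.1, true), (gam tp.head).2)
      else absRead tp (z + dm mv) := by
    intro z; rw [htp', read_write]
  have hF1 : ∀ z, F1 tp' z = F1 tp (z + dm mv) := by
    intro z
    show (absRead tp' z).1.1 = _
    rw [hrw]
    split
    · next h =>
      subst h
      rw [show -(dm mv) + dm mv = 0 by ring]
      show _ = (absRead tp 0).1.1
      rw [absRead_zero]
    · rfl
  have hB1 : ∀ z, B1 tp' z = if z = -(dm mv) then true else B1 tp (z + dm mv) := by
    intro z
    show (absRead tp' z).1.2 = _
    rw [hrw]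
    split <;> rfl
  have hF2 : ∀ z, F2 tp' z = F2 tp (z + dm mv) := by
    intro z
    show (absRead tp' z).2.1 = _
    rw [hrw]
    split
    · next h =>
      subst h
      rw [show -(dm mv) + dm mv = 0 by ring]
      show _ = (absRead tp 0).2.1
      rw [absRead_zero]
    · rfl
  have hB2 : ∀ z, B2 tp' z = B2 tp (z + dm mv) := by
    intro z
    show (absRead tp' z).2.2 = _
    rw [hrw]
    split
    · next h =>
      subst h
      rw [show -(dm mv) + dm mv = 0 by ring]
      show _ = (absRead tp 0).2.2
      rw [absRead_zero]
    · rfl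
  have hs2 := sok_step mv h2 s2 hB2
  rw [b2_zero] at hs2
  have htm1 : TrackMatch (F1 tp') (-(dm mv)) t1 := by
    have := tm_shift (f := F1 tp) (dm mv) tm1 hF1
    simpa using this
  exact ⟨Rel.rpend2 q1 q2 d2 _ _ tp' t1 t2pre (-(dm mv)) (π2 - dm mv) e2 m2
    (mk_set h1 hB1) (mk_shift _ h2 hB2) htm1 (tm_shift _ tm2 hF2)
    (sok_new mv) hs2,
    mk_set h1 hB1, mk_shift _ h2 hB2, htm1, tm_shift _ tm2 hF2, sok_new mv, hs2⟩

/-- Core lemma for a `pend2` walking step. -/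
lemma core_pwalk (q1 q2 d2 sg1 sg2 tp t1 t2pre π1 π2 e2 m2)
    (h1 : Mk (B1 tp) π1) (h2 : Mk (B2 tp) π2)
    (tm1 : TrackMatch (F1 tp) π1 t1) (tm2 : TrackMatch (F2 tp) π2 t2pre)
    (s1 : SOK (B1 tp) π1 sg1) (s2 : SOK (B2 tp) π2 sg2)
    (hb : (gam tp.head).2.2 = false) :
    Rel M₁ M₂ (⟨q1, q2, d2, updSg (gam tp.head).1.2 sg1 sg2, sg2, .pend2 e2 m2⟩,
        tp.writeMove (some (gam tp.head)) sg2)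
      ((q1, t1), (q2, t2pre.writeMove e2 m2))
    ∧ Inv2 (tp.writeMove (some (gam tp.head)) sg2) t1 t2pre (π1 - dm sg2) (π2 - dm sg2)
        (updSg (gam tp.head).1.2 sg1 sg2) sg2 := by
  set tp' := tp.writeMove (some (gam tp.head)) sg2 with htp'
  have hsh : ∀ z, absRead tp' z = absRead tp (z + dm sg2) := fun z => by
    rw [htp', read_write_id]
  have hF1 : ∀ z, F1 tp' z = F1 tp (z + dm sg2) := fun z => by
    show (absRead tp' z).1.1 = _; rw [hsh]; rfl
  have hF2 : ∀ z, F2 tp' z = F2 tp (z + dm sg2) := fun z => by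
    show (absRead tp' z).2.1 = _; rw [hsh]; rfl
  have hB1 : ∀ z, B1 tp' z = B1 tp (z + dm sg2) := fun z => by
    show (absRead tp' z).1.2 = _; rw [hsh]; rfl
  have hB2 : ∀ z, B2 tp' z = B2 tp (z + dm sg2) := fun z => by
    show (absRead tp' z).2.2 = _; rw [hsh]; rfl
  have hs1 := sok_step sg2 h1 s1 hB1
  rw [b1_zero] at hs1
  have hs2 := sok_step sg2 h2 s2 hB2
  rw [b2_zero, hb, updSg_false] at hs2
  exact ⟨Rel.rpend2 q1 q2 d2 _ _ tp' t1 t2pre _ _ e2 m2 (mk_shift _ h1 hB1)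
    (mk_shift _ h2 hB2) (tm_shift _ tm1 hF1) (tm_shift _ tm2 hF2) hs1 hs2,
    mk_shift _ h1 hB1, mk_shift _ h2 hB2, tm_shift _ tm1 hF1, tm_shift _ tm2 hF2, hs1, hs2⟩

/-- Core lemma for the `pact` step. -/
lemma core_pact (q1 q2 d2 sg1 sg2 tp t1 t2pre π1 e2 m2)
    (h1 : Mk (B1 tp) π1) (h2 : Mk (B2 tp) 0)
    (tm1 : TrackMatch (F1 tp) π1 t1) (tm2 : TrackMatch (F2 tp) 0 t2pre)
    (s1 : SOK (B1 tp) π1 sg1) :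
    Rel M₁ M₂ (⟨q1, q2, d2, updSg (gam tp.head).1.2 sg1 m2, sg2, .mark2⟩,
        tp.writeMove (some ((gam tp.head).1, (e2, false))) m2)
      ((q1, t1), (q2, t2pre.writeMove e2 m2))
    ∧ InvM2 (tp.writeMove (some ((gam tp.head).1, (e2, false))) m2) t1
        (t2pre.writeMove e2 m2) (π1 - dm m2) (updSg (gam tp.head).1.2 sg1 m2) := by
  set tp' := tp.writeMove (some ((gam tp.head).1, (e2, false))) m2 with htp'
  have hrw : ∀ z, absRead tp' z =
      if z = -(dm m2) then ((gam tp.head).1, (e2, false)) else absRead tp (z + dm m2) := by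
    intro z; rw [htp', read_write]
  have hF2 : ∀ z, F2 tp' z = if z = -(dm m2) then e2 else F2 tp (z + dm m2) := by
    intro z
    show (absRead tp' z).2.1 = _
    rw [hrw]
    split <;> rfl
  have hB2 : ∀ z, B2 tp' z = if z = -(dm m2) then false else B2 tp (z + dm m2) := by
    intro z
    show (absRead tp' z).2.2 = _
    rw [hrw]
    split <;> rfl
  have hF1 : ∀ z, F1 tp' z = F1 tp (z + dm m2) := by
    intro z
    show (absRead tp' z).1.1 = _
    rw [hrw]
    split
    · next h =>
      subst h
      rw [show -(dm m2) + dm m2 = 0 by ring]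
      show _ = (absRead tp 0).1.1
      rw [absRead_zero]
    · rfl
  have hB1 : ∀ z, B1 tp' z = B1 tp (z + dm m2) := by
    intro z
    show (absRead tp' z).1.2 = _
    rw [hrw]
    split
    · next h =>
      subst h
      rw [show -(dm m2) + dm m2 = 0 by ring]
      show _ = (absRead tp 0).1.2
      rw [absRead_zero]
    · rfl
  have hs1 := sok_step m2 h1 s1 hB1
  rw [b1_zero] at hs1
  exact ⟨Rel.rmark2 q1 q2 d2 _ sg2 tp' t1 (t2pre.writeMove e2 m2) _
    (mk_shift _ h1 hB1) (nomk_unset h2 hB2) (tm_shift _ tm1 hF1)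
    (tm_write e2 m2 tm2 hF2) hs1,
    mk_shift _ h1 hB1, nomk_unset h2 hB2, tm_shift _ tm1 hF1,
    tm_write e2 m2 tm2 hF2, hs1⟩

/-- Core lemma for the `mark2` step. -/
lemma core_mark2 (q1 q2 sg1 tp t1 t2 π1)
    (h1 : Mk (B1 tp) π1) (h2 : NoMk (B2 tp))
    (tm1 : TrackMatch (F1 tp) π1 t1) (tm2 : TrackMatch (F2 tp) 0 t2)
    (s1 : SOK (B1 tp) π1 sg1) :
    Rel M₁ M₂ (⟨q1, q2, (gam tp.head).2.1, updSg (gam tp.head).1.2 sg1 .L, .R, .idle⟩,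
        tp.writeMove (some ((gam tp.head).1, ((gam tp.head).2.1, true))) .L)
      ((q1, t1), (q2, t2))
    ∧ Inv2 (tp.writeMove (some ((gam tp.head).1, ((gam tp.head).2.1, true))) .L)
        t1 t2 (π1 + 1) 1 (updSg (gam tp.head).1.2 sg1 .L) .R := by
  set tp' := tp.writeMove (some ((gam tp.head).1, ((gam tp.head).2.1, true))) .L with htp'
  have hrw : ∀ z, absRead tp' z =
      if z = 1 then ((gam tp.head).1, ((gam tp.head).2.1, true)) else absRead tp (z + -1) := by
    intro z; rw [htp', read_write]; simp [dm]
  have hF1 : ∀ z, F1 tp' z = F1 tp (z + -1) := by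
    intro z
    show (absRead tp' z).1.1 = _
    rw [hrw]
    split
    · next h =>
      subst h
      rw [show (1:ℤ) + -1 = 0 by ring]
      show _ = (absRead tp 0).1.1
      rw [absRead_zero]
    · rfl
  have hB1 : ∀ z, B1 tp' z = B1 tp (z + -1) := by
    intro z
    show (absRead tp' z).1.2 = _
    rw [hrw]
    split
    · next h =>
      subst h
      rw [show (1:ℤ) + -1 = 0 by ring]
      show _ = (absRead tp 0).1.2
      rw [absRead_zero]
    · rfl
  have hF2 : ∀ z, F2 tp' z = F2 tp (z + -1) := by
    intro z
    show (absRead tp' z).2.1 = _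
    rw [hrw]
    split
    · next h =>
      subst h
      rw [show (1:ℤ) + -1 = 0 by ring]
      show _ = (absRead tp 0).2.1
      rw [absRead_zero]
    · rfl
  have hB2 : ∀ z, B2 tp' z = if z = 1 then true else B2 tp (z + -1) := by
    intro z
    show (absRead tp' z).2.2 = _
    rw [hrw]
    split <;> rfl
  have hB1' : ∀ z, B1 tp' z = B1 tp (z + dm .L) := by simpa [dm] using hB1
  have hs1 := sok_step (b := B1 tp) .L h1 s1 hB1'
  rw [b1_zero] at hs1
  have hs1' : SOK (B1 tp') (π1 + 1) (updSg (gam tp.head).1.2 sg1 .L) := by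
    have : π1 - dm Move.L = π1 + 1 := by simp only [dm]; ring
    rwa [this] at hs1
  have htm1 : TrackMatch (F1 tp') (π1 + 1) t1 := by
    have := tm_shift (f := F1 tp) (-1) tm1 hF1
    simpa using this
  have htm2 : TrackMatch (F2 tp') 1 t2 := by
    have := tm_shift (f := F2 tp) (-1) tm2 hF2
    simpa using this
  have hmk1 : Mk (B1 tp') (π1 + 1) := by
    have := mk_shift (b := B1 tp) (-1) h1 hB1
    simpa using this
  have hd2 : (gam tp.head).2.1 = t2.head := by
    rw [← f2_zero]
    exact tm2.1
  refine ⟨?_, hmk1, mk_set h2 hB2, htm1, htm2, hs1', fun _ => by simp⟩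
  rw [hd2]
  exact Rel.ridle q1 q2 _ _ tp' t1 t2 (π1 + 1) 1 hmk1 (mk_set h2 hB2) htm1 htm2
    hs1' (fun _ => by simp)

end Cores

/-! ### Measure and the master step lemma -/

def rank {D : Type} : Ph D → ℕ
  | .boot => 4
  | .mark1 _ => 3
  | .pend2 _ _ => 2
  | .mark2 => 1
  | .idle => 0

open Classical in
noncomputable def markPos (b : ℤ → Bool) : ℤ :=
  if h : ∃ z, b z = true then h.choose else 0

lemma markPos_eq {b : ℤ → Bool} {π : ℤ} (h : Mk b π) : markPos b = π := by
  have hex : ∃ z, b z = true := ⟨π, (h π).2 rfl⟩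
  rw [markPos, dif_pos hex]
  exact (h _).1 hex.choose_spec

noncomputable def μ {Q1 Q2 D : Type} (u : Ctrl Q1 Q2 D × Tape (Cell D)) : ℕ × ℕ :=
  (rank u.1.ph,
    match u.1.ph with
    | .idle => (markPos (B1 u.2)).natAbs
    | .pend2 _ _ => (markPos (B2 u.2)).natAbs
    | _ => 0)

section Main

variable {C D B : Type} {M₁ M₂ : RTM (CAct C (Option D) B) D} {C' : Set C}

/-- Master classification of machine steps from related states. -/
lemma step_main {u : Ctrl M₁.Q M₂.Q D × Tape (Cell D)}
    {s : (M₁.Q × Tape D) × (M₂.Q × Tape D)}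
    {a : Option (CAct C (Option D) B)} {e : Option (Cell D)} {mv : Move}
    {ct' : Ctrl M₁.Q M₂.Q D}
    (hR : Rel M₁ M₂ u s) (hM : MTr M₁ M₂ C' u.1 u.2.head a e mv ct') :
    (a = none ∧ Rel M₁ M₂ (ct', u.2.writeMove e mv) s ∧
      Prod.Lex (· < ·) (· < ·) (μ (ct', u.2.writeMove e mv)) (μ u)) ∨
    (∃ s', (parLTS C' M₁.lts M₂.lts).tr s a s' ∧
      Rel M₁ M₂ (ct', u.2.writeMove e mv) s') := by
  obtain ⟨ct, tp⟩ := u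
  cases hR with
  | rboot q1 q2 sg1 sg2 tp t1 t2 hbl tm1 tm2 =>
    cases hM with
    | boot =>
      left
      refine ⟨rfl, (core_boot _ _ _ _ _ hbl tm1 tm2).1, ?_⟩
      simp only [μ, rank]
      exact Prod.Lex.left _ _ (by norm_num)
  | ridle q1 q2 sg1 sg2 tp t1 t2 π1 π2 h1 h2 tm1 tm2 s1 s2 =>
    cases hM with
    | walk q1a q2a d2a sg1a sg2a ca hb =>
      left
      obtain ⟨hrel, hmk, -, -, -, -, -⟩ := core_walk (M₁ := M₁) (M₂ := M₂) _ _ _ _ _ _ _ _ _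
        h1 h2 tm1 tm2 s1 s2 hb
      refine ⟨rfl, hrel, ?_⟩
      have hb0 : B1 tp 0 = false := by rw [b1_zero]; exact hb
      have hπ : π1 ≠ 0 := by
        intro hh
        subst hh
        rw [(h1 0).2 rfl] at hb0
        exact absurd hb0 (by simp)
      obtain ⟨hdec, hne⟩ := dist_dec s1 hb0 hπ
      simp only [μ, rank]
      apply Prod.Lex.right
      rw [markPos_eq hmk, markPos_eq h1]
      omega
    | act1 q1a q2a d2a sg1a sg2a ca aa e1 m1a q1' hb ht hic =>
      right
      have hπ : (0:ℤ) = π1 := by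
        apply (h1 0).1
        rw [b1_zero]
        exact hb
      subst hπ
      have ht' : M₁.trans q1 t1.head a e1 mv q1' := by
        rwa [← f1_zero tp, tm1.1] at ht
      exact ⟨((q1', t1.writeMove e1 mv), (q2, t2)),
        ⟨hic, Or.inl ⟨⟨e1, mv, ht', rfl⟩, rfl⟩⟩,
        core_act1 _ _ _ _ _ _ _ _ _ _ h1 h2 tm1 tm2 s2⟩
    | act2 q1a q2a d2a sg1a sg2a ca aa e2 m2 q2' hb ht hic =>
      right
      have hπ : (0:ℤ) = π1 := by
        apply (h1 0).1
        rw [b1_zero]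
        exact hb
      subst hπ
      exact ⟨((q1, t1), (q2', t2.writeMove e2 m2)),
        ⟨hic, Or.inr (Or.inl ⟨⟨e2, m2, ht, rfl⟩, rfl⟩)⟩,
        core_act2 _ _ _ _ _ _ _ _ _ _ h1 h2 tm1 tm2 s1 s2⟩
    | act3 q1a q2a d2a sg1a sg2a ca ch v e1 m1a q1' e2 m2 q2' hb hch ht =>
      right
      have hπ : (0:ℤ) = π1 := by
        apply (h1 0).1
        rw [b1_zero]
        exact hb
      subst hπ
      have hd1 : (gam tp.head).1.1 = t1.head := by rw [← f1_zero tp]; exact tm1.1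
      rw [hd1] at ht
      refine ⟨((q1', t1.writeMove e1 mv), (q2', t2.writeMove e2 m2)),
        ⟨fun h => h, Or.inr (Or.inr ⟨rfl, ch, hch, v, ?_⟩)⟩,
        core_act3 _ _ _ _ _ _ _ _ _ _ _ _ _ h1 h2 tm1 tm2 s2⟩
      rcases ht with ⟨ht1, ht2⟩ | ⟨ht1, ht2⟩
      · exact Or.inl ⟨⟨e1, mv, ht1, rfl⟩, ⟨e2, m2, ht2, rfl⟩⟩
      · exact Or.inr ⟨⟨e1, mv, ht1, rfl⟩, ⟨e2, m2, ht2, rfl⟩⟩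
  | rmark1none q1 q2 sg1 sg2 tp t1 t2 π2 h1 h2 tm1 tm2 s2 =>
    cases hM with
    | mark1none q1a q2a d2a sg1a sg2a ca =>
      left
      refine ⟨rfl, (core_mark1none _ _ _ _ _ _ _ h1 h2 tm1 tm2 s2).1, ?_⟩
      simp only [μ, rank]
      exact Prod.Lex.left _ _ (by norm_num)
  | rmark1some q1 q2 d2 sg1 sg2 tp t1 t2pre π2 e2 m2 h1 h2 tm1 tm2 s2 =>
    cases hM with
    | mark1some q1a q2a d2a sg1a sg2a ca e2a m2a =>
      left
      refine ⟨rfl, (core_mark1some _ _ _ _ _ _ _ _ _ _ h1 h2 tm1 tm2 s2).1, ?_⟩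
      simp only [μ, rank]
      exact Prod.Lex.left _ _ (by norm_num)
  | rpend2 q1 q2 d2 sg1 sg2 tp t1 t2pre π1 π2 e2 m2 h1 h2 tm1 tm2 s1 s2 =>
    cases hM with
    | pwalk q1a q2a d2a sg1a sg2a ca e2a m2a hb =>
      left
      obtain ⟨hrel, -, hmk, -, -, -, -⟩ := core_pwalk (M₁ := M₁) (M₂ := M₂) _ _ _ _ _ _ _ _ _ _ _ _
        h1 h2 tm1 tm2 s1 s2 hb
      refine ⟨rfl, hrel, ?_⟩
      have hb0 : B2 tp 0 = false := by rw [b2_zero]; exact hb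
      have hπ : π2 ≠ 0 := by
        intro hh
        subst hh
        rw [(h2 0).2 rfl] at hb0
        exact absurd hb0 (by simp)
      obtain ⟨hdec, hne⟩ := dist_dec s2 hb0 hπ
      simp only [μ, rank]
      apply Prod.Lex.right
      rw [markPos_eq hmk, markPos_eq h2]
      omega
    | pact q1a q2a d2a sg1a sg2a ca e2a m2a hb =>
      left
      have hπ : (0:ℤ) = π2 := by
        apply (h2 0).1
        rw [b2_zero]
        exact hb
      subst hπ
      refine ⟨rfl, (core_pact _ _ _ _ _ _ _ _ _ _ _ h1 h2 tm1 tm2 s1).1, ?_⟩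
      simp only [μ, rank]
      exact Prod.Lex.left _ _ (by norm_num)
  | rmark2 q1 q2 d2 sg1 sg2 tp t1 t2 π1 h1 h2 tm1 tm2 s1 =>
    cases hM with
    | mark2 q1a q2a d2a sg1a sg2a ca =>
      left
      refine ⟨rfl, (core_mark2 _ _ _ _ _ _ _ h1 h2 tm1 tm2 s1).1, ?_⟩
      simp only [μ, rank]
      exact Prod.Lex.left _ _ (by norm_num)

end Main

/-! ### Walking, normalisation, and simulation paths -/

section Paths

variable {C D B : Type} [Fintype C] [Fintype D] [Fintype B]
variable {M₁ M₂ : RTM (CAct C (Option D) B) D} {C' : Set C}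

lemma mstep {ct : Ctrl M₁.Q M₂.Q D} {tp : Tape (Cell D)} {a e mv ct'}
    (h : MTr M₁ M₂ C' ct tp.head a e mv ct') :
    (Mach M₁ M₂ C').lts.tr (ct, tp) a (ct', tp.writeMove e mv) :=
  ⟨e, mv, h, rfl⟩

/-- Walking to marker 1 while idle, ending at the marker. -/
lemma walk_to_m1 (n : ℕ) :
    ∀ (q1 : M₁.Q) (q2 : M₂.Q) (d2v : Option D) (sg1 sg2 : Move) (tp : Tape (Cell D))
      (t1 t2 : Tape D) (π1 π2 : ℤ), Inv2 tp t1 t2 π1 π2 sg1 sg2 → π1.natAbs = n →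
      ∃ (sg1' sg2' : Move) (tpw : Tape (Cell D)) (π2w : ℤ),
        Relation.ReflTransGen (Mach M₁ M₂ C').lts.tauStep
          ((⟨q1, q2, d2v, sg1, sg2, .idle⟩ : Ctrl M₁.Q M₂.Q D), tp)
          ((⟨q1, q2, d2v, sg1', sg2', .idle⟩ : Ctrl M₁.Q M₂.Q D), tpw) ∧
        Inv2 tpw t1 t2 0 π2w sg1' sg2' := by
  induction n with
  | zero =>
    intro q1 q2 d2v sg1 sg2 tp t1 t2 π1 π2 hinv hn
    have hπ : π1 = 0 := by omega
    subst hπ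
    exact ⟨sg1, sg2, tp, π2, Relation.ReflTransGen.refl, hinv⟩
  | succ n ih =>
    intro q1 q2 d2v sg1 sg2 tp t1 t2 π1 π2 hinv hn
    obtain ⟨h1, h2, tm1, tm2, s1, s2⟩ := hinv
    have hπ : π1 ≠ 0 := by
      intro hh
      subst hh
      simp at hn
    have hb0 : B1 tp 0 = false := by
      cases hbc : B1 tp 0
      · rfl
      · exact absurd ((h1 0).1 hbc).symm hπ
    have hb : (gam tp.head).1.2 = false := by rw [← b1_zero]; exact hb0
    obtain ⟨-, hinv'⟩ := core_walk (M₁ := M₁) (M₂ := M₂) q1 q2 sg1 sg2 tp t1 t2 π1 π2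
      h1 h2 tm1 tm2 s1 s2 hb
    have hstep : (Mach M₁ M₂ C').lts.tauStep (⟨q1, q2, d2v, sg1, sg2, .idle⟩, tp)
        (⟨q1, q2, d2v, sg1, updSg (gam tp.head).2.2 sg2 sg1, .idle⟩,
          tp.writeMove (some (gam tp.head)) sg1) :=
      mstep (MTr.walk q1 q2 d2v sg1 sg2 tp.head hb)
    obtain ⟨hdec, hne⟩ := dist_dec s1 hb0 hπ
    obtain ⟨sg1', sg2', tpw, π2w, hw, hinvw⟩ :=
      ih q1 q2 d2v _ _ _ t1 t2 _ _ hinv' (by omega)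
    exact ⟨sg1', sg2', tpw, π2w, Relation.ReflTransGen.head hstep hw, hinvw⟩

/-- Completing a `pend2` phase: walk to marker 2, perform the pending write,
mark, and then walk back to marker 1. -/
lemma walk_pend2 (n : ℕ) :
    ∀ (q1 : M₁.Q) (q2 : M₂.Q) (d2 : Option D) (sg1 sg2 : Move) (tp : Tape (Cell D))
      (t1 t2pre : Tape D) (π1 π2 : ℤ) (e2 : Option D) (m2 : Move),
      Inv2 tp t1 t2pre π1 π2 sg1 sg2 → π2.natAbs = n →
      ∃ (sg1' sg2' : Move) (tpw : Tape (Cell D)) (π2w : ℤ),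
        Relation.ReflTransGen (Mach M₁ M₂ C').lts.tauStep
          ((⟨q1, q2, d2, sg1, sg2, .pend2 e2 m2⟩ : Ctrl M₁.Q M₂.Q D), tp)
          ((⟨q1, q2, (t2pre.writeMove e2 m2).head, sg1', sg2', .idle⟩ :
              Ctrl M₁.Q M₂.Q D), tpw) ∧
        Inv2 tpw t1 (t2pre.writeMove e2 m2) 0 π2w sg1' sg2' := by
  induction n with
  | zero =>
    intro q1 q2 d2 sg1 sg2 tp t1 t2pre π1 π2 e2 m2 hinv hn
    obtain ⟨h1, h2, tm1, tm2, s1, s2⟩ := hinv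
    have hπ : π2 = 0 := by omega
    subst hπ
    have hb2 : (gam tp.head).2.2 = true := by rw [← b2_zero]; exact (h2 0).2 rfl
    have hstep1 : (Mach M₁ M₂ C').lts.tauStep (⟨q1, q2, d2, sg1, sg2, .pend2 e2 m2⟩, tp)
        (⟨q1, q2, d2, updSg (gam tp.head).1.2 sg1 m2, sg2, .mark2⟩,
          tp.writeMove (some ((gam tp.head).1, (e2, false))) m2) :=
      mstep (MTr.pact q1 q2 d2 sg1 sg2 tp.head e2 m2 hb2)
    obtain ⟨-, hm1', hm2', htm1', htm2', hs1'⟩ :=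
      core_pact (M₁ := M₁) (M₂ := M₂) q1 q2 d2 sg1 sg2 tp t1 t2pre π1 e2 m2
        h1 h2 tm1 tm2 s1
    set sg1b := updSg (gam tp.head).1.2 sg1 m2 with hsg1b
    set tpb := tp.writeMove (some ((gam tp.head).1, (e2, false))) m2 with htpb
    set t2' := t2pre.writeMove e2 m2 with ht2'
    have hd2 : (gam tpb.head).2.1 = t2'.head := by
      rw [← f2_zero]
      exact htm2'.1
    have hstep2 : (Mach M₁ M₂ C').lts.tauStep (⟨q1, q2, d2, sg1b, sg2, .mark2⟩, tpb)
        (⟨q1, q2, (gam tpb.head).2.1, updSg (gam tpb.head).1.2 sg1b .L, .R, .idle⟩,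
          tpb.writeMove (some ((gam tpb.head).1, ((gam tpb.head).2.1, true))) .L) :=
      mstep (MTr.mark2 q1 q2 d2 sg1b sg2 tpb.head)
    obtain ⟨-, hinv2⟩ := core_mark2 (M₁ := M₁) (M₂ := M₂) q1 q2 sg1b tpb t1 t2'
      _ hm1' hm2' htm1' htm2' hs1'
    obtain ⟨sg1', sg2', tpw, π2w, hw, hinvw⟩ :=
      walk_to_m1 (π1 - dm m2 + 1).natAbs q1 q2 ((gam tpb.head).2.1) _ _ _ t1 t2' _ _
        hinv2 rfl
    have hfull := Relation.ReflTransGen.head hstep1 (Relation.ReflTransGen.head hstep2 hw)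
    rw [hd2] at hfull
    exact ⟨sg1', sg2', tpw, π2w, hfull, hinvw⟩
  | succ n ih =>
    intro q1 q2 d2 sg1 sg2 tp t1 t2pre π1 π2 e2 m2 hinv hn
    obtain ⟨h1, h2, tm1, tm2, s1, s2⟩ := hinv
    have hπ : π2 ≠ 0 := by
      intro hh
      subst hh
      simp at hn
    have hb0 : B2 tp 0 = false := by
      cases hbc : B2 tp 0
      · rfl
      · exact absurd ((h2 0).1 hbc).symm hπ
    have hb : (gam tp.head).2.2 = false := by rw [← b2_zero]; exact hb0
    obtain ⟨-, hinv'⟩ := core_pwalk (M₁ := M₁) (M₂ := M₂) q1 q2 d2 sg1 sg2 tp t1 t2pre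
      π1 π2 e2 m2 h1 h2 tm1 tm2 s1 s2 hb
    have hstep : (Mach M₁ M₂ C').lts.tauStep (⟨q1, q2, d2, sg1, sg2, .pend2 e2 m2⟩, tp)
        (⟨q1, q2, d2, updSg (gam tp.head).1.2 sg1 sg2, sg2, .pend2 e2 m2⟩,
          tp.writeMove (some (gam tp.head)) sg2) :=
      mstep (MTr.pwalk q1 q2 d2 sg1 sg2 tp.head e2 m2 hb)
    obtain ⟨hdec, hne⟩ := dist_dec s2 hb0 hπ
    obtain ⟨sg1', sg2', tpw, π2w, hw, hinvw⟩ :=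
      ih q1 q2 d2 _ _ _ t1 t2pre _ _ e2 m2 hinv' (by omega)
    exact ⟨sg1', sg2', tpw, π2w, Relation.ReflTransGen.head hstep hw, hinvw⟩

/-- Every related machine state can silently reach an idle state standing at
marker 1 (with full invariant data). -/
lemma normalize {u : Ctrl M₁.Q M₂.Q D × Tape (Cell D)}
    {s : (M₁.Q × Tape D) × (M₂.Q × Tape D)} (hR : Rel M₁ M₂ u s) :
    ∃ (sg1' sg2' : Move) (tpw : Tape (Cell D)) (π2w : ℤ),
      Relation.ReflTransGen (Mach M₁ M₂ C').lts.tauStep u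
        ((⟨s.1.1, s.2.1, s.2.2.head, sg1', sg2', .idle⟩ : Ctrl M₁.Q M₂.Q D), tpw) ∧
      Inv2 tpw s.1.2 s.2.2 0 π2w sg1' sg2' := by
  cases hR with
  | rboot q1 q2 sg1 sg2 tp t1 t2 hbl tm1 tm2 =>
    have hstep : (Mach M₁ M₂ C').lts.tauStep (⟨q1, q2, t2.head, sg1, sg2, .boot⟩, tp)
        (⟨q1, q2, t2.head, .R, .R, .idle⟩,
          tp.writeMove (some ((none, true), (none, true))) .L) :=
      mstep (MTr.boot q1 q2 t2.head sg1 sg2 tp.head)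
    obtain ⟨-, hinv⟩ := core_boot (M₁ := M₁) (M₂ := M₂) q1 q2 tp t1 t2 hbl tm1 tm2
    obtain ⟨sg1', sg2', tpw, π2w, hw, hinvw⟩ :=
      walk_to_m1 (1 : ℤ).natAbs q1 q2 t2.head _ _ _ t1 t2 _ _ hinv rfl
    exact ⟨sg1', sg2', tpw, π2w, Relation.ReflTransGen.head hstep hw, hinvw⟩
  | ridle q1 q2 sg1 sg2 tp t1 t2 π1 π2 h1 h2 tm1 tm2 s1 s2 =>
    exact walk_to_m1 π1.natAbs q1 q2 t2.head sg1 sg2 tp t1 t2 π1 π2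
      ⟨h1, h2, tm1, tm2, s1, s2⟩ rfl
  | rmark1none q1 q2 sg1 sg2 tp t1 t2 π2 h1 h2 tm1 tm2 s2 =>
    have hstep : (Mach M₁ M₂ C').lts.tauStep (⟨q1, q2, t2.head, sg1, sg2, .mark1 none⟩, tp)
        (⟨q1, q2, t2.head, .R, updSg (gam tp.head).2.2 sg2 .L, .idle⟩,
          tp.writeMove (some (((gam tp.head).1.1, true), (gam tp.head).2)) .L) :=
      mstep (MTr.mark1none q1 q2 t2.head sg1 sg2 tp.head)
    obtain ⟨-, hinv⟩ := core_mark1none (M₁ := M₁) (M₂ := M₂) q1 q2 sg2 tp t1 t2 π2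
      h1 h2 tm1 tm2 s2
    obtain ⟨sg1', sg2', tpw, π2w, hw, hinvw⟩ :=
      walk_to_m1 (1 : ℤ).natAbs q1 q2 t2.head _ _ _ t1 t2 _ _ hinv rfl
    exact ⟨sg1', sg2', tpw, π2w, Relation.ReflTransGen.head hstep hw, hinvw⟩
  | rmark1some q1 q2 d2 sg1 sg2 tp t1 t2pre π2 e2 m2 h1 h2 tm1 tm2 s2 =>
    have hstep : (Mach M₁ M₂ C').lts.tauStep
        (⟨q1, q2, d2, sg1, sg2, .mark1 (some (e2, m2))⟩, tp)
        (⟨q1, q2, d2, opp (if (gam tp.head).2.2 then .L else sg2),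
            updSg (gam tp.head).2.2 sg2 (if (gam tp.head).2.2 then .L else sg2),
            .pend2 e2 m2⟩,
          tp.writeMove (some (((gam tp.head).1.1, true), (gam tp.head).2))
            (if (gam tp.head).2.2 then .L else sg2)) :=
      mstep (MTr.mark1some q1 q2 d2 sg1 sg2 tp.head e2 m2)
    obtain ⟨-, hinv⟩ := core_mark1some (M₁ := M₁) (M₂ := M₂) q1 q2 d2 sg2 tp t1 t2pre π2
      e2 m2 h1 h2 tm1 tm2 s2
    obtain ⟨sg1', sg2', tpw, π2w, hw, hinvw⟩ :=
      walk_pend2 (π2 - dm (if (gam tp.head).2.2 then Move.L else sg2)).natAbs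
        q1 q2 d2 _ _ _ t1 t2pre _ _ e2 m2 hinv rfl
    exact ⟨sg1', sg2', tpw, π2w, Relation.ReflTransGen.head hstep hw, hinvw⟩
  | rpend2 q1 q2 d2 sg1 sg2 tp t1 t2pre π1 π2 e2 m2 h1 h2 tm1 tm2 s1 s2 =>
    exact walk_pend2 π2.natAbs q1 q2 d2 sg1 sg2 tp t1 t2pre π1 π2 e2 m2
      ⟨h1, h2, tm1, tm2, s1, s2⟩ rfl
  | rmark2 q1 q2 d2 sg1 sg2 tp t1 t2 π1 h1 h2 tm1 tm2 s1 =>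
    have hd2 : (gam tp.head).2.1 = t2.head := by
      rw [← f2_zero]
      exact tm2.1
    have hstep : (Mach M₁ M₂ C').lts.tauStep (⟨q1, q2, d2, sg1, sg2, .mark2⟩, tp)
        (⟨q1, q2, (gam tp.head).2.1, updSg (gam tp.head).1.2 sg1 .L, .R, .idle⟩,
          tp.writeMove (some ((gam tp.head).1, ((gam tp.head).2.1, true))) .L) :=
      mstep (MTr.mark2 q1 q2 d2 sg1 sg2 tp.head)
    obtain ⟨-, hinv⟩ := core_mark2 (M₁ := M₁) (M₂ := M₂) q1 q2 sg1 tp t1 t2 π1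
      h1 h2 tm1 tm2 s1
    obtain ⟨sg1', sg2', tpw, π2w, hw, hinvw⟩ :=
      walk_to_m1 (π1 + 1).natAbs q1 q2 ((gam tp.head).2.1) _ _ _ t1 t2 _ _ hinv rfl
    have hfull := Relation.ReflTransGen.head hstep hw
    rw [hd2] at hfull
    exact ⟨sg1', sg2', tpw, π2w, hfull, hinvw⟩

end Paths

/-! ### Simulation of composed transitions, and the main theorem -/

section Assemble

variable {C D B : Type} [Fintype C] [Fintype D] [Fintype B]
variable {M₁ M₂ : RTM (CAct C (Option D) B) D} {C' : Set C}

/-- Simulation of a single transition of the parallel composition. -/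
lemma sim {u : Ctrl M₁.Q M₂.Q D × Tape (Cell D)}
    {s s' : (M₁.Q × Tape D) × (M₂.Q × Tape D)} {a : Option (CAct C (Option D) B)}
    (hR : Rel M₁ M₂ u s) (hstep : (parLTS C' M₁.lts M₂.lts).tr s a s') :
    ∃ w u', Relation.ReflTransGen (Mach M₁ M₂ C').lts.tauStep u w ∧
      Rel M₁ M₂ w s ∧ (Mach M₁ M₂ C').lts.tr w a u' ∧ Rel M₁ M₂ u' s' := by
  obtain ⟨⟨p1, t1⟩, p2, t2⟩ := s
  obtain ⟨⟨p1', t1'⟩, p2', t2'⟩ := s'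
  obtain ⟨sg1', sg2', tpw, π2w, hw, hinv⟩ := normalize (C' := C') hR
  obtain ⟨h1, h2, tm1, tm2, s1, s2⟩ := hinv
  have hbit : (gam tpw.head).1.2 = true := by rw [← b1_zero]; exact (h1 0).2 rfl
  have hd1 : (gam tpw.head).1.1 = t1.head := by rw [← f1_zero]; exact tm1.1
  have hRw : Rel M₁ M₂ (⟨p1, p2, t2.head, sg1', sg2', .idle⟩, tpw) ((p1, t1), (p2, t2)) :=
    Rel.ridle _ _ _ _ _ _ _ _ _ h1 h2 tm1 tm2 s1 s2
  obtain ⟨hic, hcase⟩ := hstep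
  rcases hcase with ⟨⟨e1, m1, ht, heq⟩, heq2⟩ | ⟨⟨e2, m2, ht, heq⟩, heq2⟩ |
    ⟨ha, ch, hch, v, hor⟩
  · -- component 1 moves
    injection heq2 with hp2 ht2
    subst hp2; subst ht2; subst heq
    have ht' : M₁.trans p1 (gam tpw.head).1.1 a e1 m1 p1' := by rw [hd1]; exact ht
    exact ⟨_, _, hw, hRw,
      mstep (MTr.act1 p1 p2 t2.head sg1' sg2' tpw.head a e1 m1 p1' hbit ht' hic),
      core_act1 p1' p2 sg1' sg2' tpw t1 t2 π2w e1 m1 h1 h2 tm1 tm2 s2⟩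
  · -- component 2 moves
    injection heq2 with hp1 ht1
    subst hp1; subst ht1; subst heq
    exact ⟨_, _, hw, hRw,
      mstep (MTr.act2 p1 p2 t2.head sg1' sg2' tpw.head a e2 m2 p2' hbit ht hic),
      core_act2 p1 p2' sg1' sg2' tpw t1 t2 π2w e2 m2 h1 h2 tm1 tm2 s1 s2⟩
  · -- communication
    subst ha
    rcases hor with ⟨⟨e1, m1, ht1, heq1⟩, ⟨e2, m2, ht2, heq2⟩⟩ |
      ⟨⟨e1, m1, ht1, heq1⟩, ⟨e2, m2, ht2, heq2⟩⟩ <;> subst heq1 <;> subst heq2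
    · have ht1' : M₁.trans p1 (gam tpw.head).1.1 (some (.send ch v)) e1 m1 p1' := by
        rw [hd1]; exact ht1
      exact ⟨_, _, hw, hRw,
        mstep (MTr.act3 p1 p2 t2.head sg1' sg2' tpw.head ch v e1 m1 p1' e2 m2 p2'
          hbit hch (Or.inl ⟨ht1', ht2⟩)),
        core_act3 p1' p2' t2.head sg1' sg2' tpw t1 t2 π2w e1 m1 e2 m2
          h1 h2 tm1 tm2 s2⟩
    · have ht1' : M₁.trans p1 (gam tpw.head).1.1 (some (.recv ch v)) e1 m1 p1' := by
        rw [hd1]; exact ht1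
      exact ⟨_, _, hw, hRw,
        mstep (MTr.act3 p1 p2 t2.head sg1' sg2' tpw.head ch v e1 m1 p1' e2 m2 p2'
          hbit hch (Or.inr ⟨ht1', ht2⟩)),
        core_act3 p1' p2' t2.head sg1' sg2' tpw t1 t2 π2w e1 m1 e2 m2
          h1 h2 tm1 tm2 s2⟩

lemma no_descent {α : Type*} {r : α → α → Prop} (wf : WellFounded r) (g : ℕ → α)
    (h : ∀ i, r (g (i + 1)) (g i)) : False := by
  have key : ∀ x, ∀ g : ℕ → α, g 0 = x → (∀ i, r (g (i + 1)) (g i)) → False := by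
    intro x
    induction x using wf.induction with
    | _ x ih =>
      intro g hg hstep
      exact ih (g 1) (hg ▸ hstep 0) (fun i => g (i + 1)) rfl (fun i => hstep (i + 1))
  exact key (g 0) g rfl h

/-- The relation is a divergence-preserving branching bisimulation. -/
theorem main_bisim :
    IsBranchingBisimulation (Mach M₁ M₂ C').lts (parLTS C' M₁.lts M₂.lts) (Rel M₁ M₂) ∧
    DivergencePreserving (Mach M₁ M₂ C').lts (parLTS C' M₁.lts M₂.lts) (Rel M₁ M₂) := by
  constructor
  · constructor
    · -- fwd
      intro s₁ s₂ a s₁' hR htr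
      obtain ⟨ct', tp'⟩ := s₁'
      obtain ⟨e, mv, hM, htp⟩ := htr
      simp only at hM htp
      subst htp
      rcases step_main (C' := C') hR hM with ⟨ha, hrel, -⟩ | ⟨s', htr', hrel⟩
      · exact ⟨s₂, s₂, Relation.ReflTransGen.refl, Or.inr ⟨ha, rfl⟩, hR, hrel⟩
      · exact ⟨s₂, s', Relation.ReflTransGen.refl, Or.inl htr', hR, hrel⟩
    · -- bwd
      intro s₁ s₂ a s₂' hR htr
      obtain ⟨w, u', hw, hRw, hstep, hrel⟩ := sim hR htr
      exact ⟨w, u', hw, Or.inl hstep, hRw, hrel⟩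
    · -- finFwd
      intro s₁ s₂ hR hfin
      have hf : s₁.1 ∈ (Mach M₁ M₂ C').final := hfin
      cases hR with
      | rboot q1 q2 sg1 sg2 tp t1 t2 hbl tm1 tm2 => exact absurd hf.1 (by simp [Mach])
      | ridle q1 q2 sg1 sg2 tp t1 t2 π1 π2 h1 h2 tm1 tm2 s1 s2 =>
        exact ⟨_, Relation.ReflTransGen.refl,
          Rel.ridle q1 q2 sg1 sg2 tp t1 t2 π1 π2 h1 h2 tm1 tm2 s1 s2,
          hf.2.1, hf.2.2⟩
      | rmark1none q1 q2 sg1 sg2 tp t1 t2 π2 h1 h2 tm1 tm2 s2 =>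
        exact absurd hf.1 (by simp [Mach])
      | rmark1some q1 q2 d2 sg1 sg2 tp t1 t2pre π2 e2 m2 h1 h2 tm1 tm2 s2 =>
        exact absurd hf.1 (by simp [Mach])
      | rpend2 q1 q2 d2 sg1 sg2 tp t1 t2pre π1 π2 e2 m2 h1 h2 tm1 tm2 s1 s2 =>
        exact absurd hf.1 (by simp [Mach])
      | rmark2 q1 q2 d2 sg1 sg2 tp t1 t2 π1 h1 h2 tm1 tm2 s1 =>
        exact absurd hf.1 (by simp [Mach])
    · -- finBwd
      intro s₁ s₂ hR hfin
      obtain ⟨sg1', sg2', tpw, π2w, hw, hinv⟩ := normalize (C' := C') hR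
      obtain ⟨h1, h2, tm1, tm2, so1, so2⟩ := hinv
      obtain ⟨⟨p1, t1⟩, p2, t2⟩ := s₂
      refine ⟨_, hw, Rel.ridle _ _ _ _ _ _ _ _ _ h1 h2 tm1 tm2 so1 so2, ?_⟩
      exact ⟨rfl, hfin.1, hfin.2⟩
  · constructor
    · -- divergence of the machine
      intro s₂ f hτ hR
      by_cases hact : ∃ i s', (parLTS C' M₁.lts M₂.lts).tr s₂ none s' ∧
          Rel M₁ M₂ (f (i + 1)) s'
      · obtain ⟨i, s', h1, h2⟩ := hact
        exact ⟨s', Relation.TransGen.single h1, i + 1, h2⟩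
      · exfalso
        have hstut : ∀ i, Prod.Lex (· < ·) (· < ·) (μ (f (i + 1))) (μ (f i)) := by
          intro i
          obtain ⟨e, mv, hM, htp⟩ := hτ i
          have hfe : f (i + 1) = ((f (i + 1)).1, (f i).2.writeMove e mv) := by
            rw [← htp]
            exact Prod.mk.eta.symm
          rcases step_main (C' := C') (hR i) hM with ⟨-, hrel, hlex⟩ | ⟨s', htr', hrel⟩
          · rw [hfe]
            exact hlex
          · exact absurd ⟨i, s', htr', by rw [hfe]; exact hrel⟩ hact
        exact no_descent (WellFounded.prod_lex Nat.lt_wfRel.wf Nat.lt_wfRel.wf)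
          (fun i => μ (f i)) hstut
    · -- divergence of the composition
      intro s₁ f hτ hR
      obtain ⟨w, u', hw, hRw, htr, hrel⟩ := sim (hR 0) (hτ 0)
      exact ⟨u', Relation.TransGen.tail' hw htr, 1, hrel⟩

lemma rel_init :
    Rel M₁ M₂ ((Mach M₁ M₂ C').lts.init) ((parLTS C' M₁.lts M₂.lts).init) := by
  have htm : TrackMatch (F1 (Tape.empty (Cell D))) 0 (Tape.empty D) := by
    refine ⟨?_, fun k => ?_, fun k => ?_⟩
    · show (absRead (Tape.empty (Cell D)) 0).1.1 = (Tape.empty D).head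
      rw [absRead_empty]; rfl
    · show (absRead (Tape.empty (Cell D)) (0 - 1 - k)).1.1 = (Tape.empty D).left.getD k none
      rw [absRead_empty]; simp [Tape.empty, List.getD]
    · show (absRead (Tape.empty (Cell D)) (0 + 1 + k)).1.1 = (Tape.empty D).right.getD k none
      rw [absRead_empty]; simp [Tape.empty, List.getD]
  have htm2 : TrackMatch (F2 (Tape.empty (Cell D))) 0 (Tape.empty D) := by
    refine ⟨?_, fun k => ?_, fun k => ?_⟩
    · show (absRead (Tape.empty (Cell D)) 0).2.1 = (Tape.empty D).head
      rw [absRead_empty]; rfl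
    · show (absRead (Tape.empty (Cell D)) (0 - 1 - k)).2.1 = (Tape.empty D).left.getD k none
      rw [absRead_empty]; simp [Tape.empty, List.getD]
    · show (absRead (Tape.empty (Cell D)) (0 + 1 + k)).2.1 = (Tape.empty D).right.getD k none
      rw [absRead_empty]; simp [Tape.empty, List.getD]
  exact Rel.rboot M₁.init M₂.init .R .R (Tape.empty _) (Tape.empty D) (Tape.empty D)
    absRead_empty htm htm2

end Assemble

end ParSim

end RTMPaper

namespace RTMPaper

/-- The parallel composition of two reactive Turing machines
(communicating on the channels in `C'`) can be simulated, up to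
divergence-preserving branching bisimilarity, by a single reactive Turing
machine. -/
theorem parallel_composition_of_RTMs_executable
    {C D B : Type} [Fintype C] [Fintype D] [Fintype B]
    (M₁ M₂ : RTM (CAct C (Option D) B) D) (C' : Set C) :
    ∃ (D' : Type) (_ : Fintype D') (M : RTM (CAct C (Option D) B) D'),
      DPBranchingBisimilar M.lts (parLTS C' M₁.lts M₂.lts) := by
  exact ⟨ParSim.Cell D, inferInstance, ParSim.Mach M₁ M₂ C', ParSim.Rel M₁ M₂,
    (ParSim.main_bisim).1, (ParSim.main_bisim).2, ParSim.rel_init⟩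

end RTMPaper
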